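/- arXiv:1710.08371 — 7 statements merged into one kernel-verified Lean document; each statement's English description precedes it below -/
import Mathlib

section
/- For every integer a ≥ 2, #{k ∈ ℕ : 1 ≤ k, 2k ≤ a, gcd(k,a) = 1} + #{(x,y,z) ∈ ℕ³ : x,y,z ≥ 1, x+y+z = a, gcd(x,y,z) = 1} = F(a), where F(a) = Σ_{d ∣ a} μ(a/d)·(⌊d/2⌋ + (d−1)(d−2)/2). -/
/-- Number of unordered bipartitions `a = k + (a-k)` with `1 ≤ k`, `2k ≤ a`
and `gcd(k,a) = 1`. -/
def bipartCount (a : ℕ) : ℕ :=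
  ((Finset.Icc 1 a).filter fun k => 2 * k ≤ a ∧ Nat.gcd k a = 1).card

/-- Number of ordered tripartitions `a = x + y + z` with `x, y, z ≥ 1`
and `gcd(x,y,z) = 1`. -/
def tripartCount (a : ℕ) : ℕ :=
  (((Finset.Icc 1 a) ×ˢ (Finset.Icc 1 a) ×ˢ (Finset.Icc 1 a)).filter
    fun v => v.1 + v.2.1 + v.2.2 = a ∧ Nat.gcd (Nat.gcd v.1 v.2.1) v.2.2 = 1).card

/-- `F a = Σ_{d ∣ a} μ(a/d)·(⌊d/2⌋ + (d−1)(d−2)/2)`. -/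
def F (a : ℕ) : ℤ :=
  ∑ d ∈ a.divisors, ArithmeticFunction.moebius (a / d) *
    (((d / 2 : ℕ) : ℤ) + (((d - 1) * (d - 2) / 2 : ℕ) : ℤ))

lemma sum_bipartCount (n : ℕ) (hn : 0 < n) :
    ∑ d ∈ n.divisors, bipartCount d = n / 2 := by
  have htot : ((Finset.Icc 1 n).filter fun k => 2 * k ≤ n).card = n / 2 := by
    have h : ((Finset.Icc 1 n).filter fun k => 2 * k ≤ n) = Finset.Icc 1 (n / 2) := by
      ext k; simp only [Finset.mem_filter, Finset.mem_Icc]; omega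
    rw [h, Nat.card_Icc]; omega
  rw [← htot]
  rw [Finset.card_eq_sum_card_fiberwise (f := fun k => n / Nat.gcd k n)
    (t := n.divisors) (fun k hk => by
      exact Nat.mem_divisors.mpr ⟨Nat.div_dvd_of_dvd (Nat.gcd_dvd_right k n), hn.ne'⟩)]
  refine Finset.sum_congr rfl fun d hd => ?_
  obtain ⟨hdvd, -⟩ := Nat.mem_divisors.mp hd
  have hd0 : 0 < d := Nat.pos_of_mem_divisors hd
  obtain ⟨c, hcd⟩ := hdvd
  have hc : n / d = c := by rw [hcd, Nat.mul_div_cancel_left c hd0]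
  have hc0 : 0 < c := by
    rcases Nat.eq_zero_or_pos c with h | h
    · rw [h, mul_zero] at hcd; omega
    · exact h
  have hnc : n / c = d := by rw [hcd, Nat.mul_div_cancel d hc0]
  unfold bipartCount
  refine Finset.card_bij' (fun m _ => m * c) (fun k _ => k / c) ?_ ?_ ?_ ?_
  · intro m hm
    simp only [Finset.mem_filter, Finset.mem_Icc] at hm ⊢
    obtain ⟨⟨h1, h2⟩, h3, h4⟩ := hm
    have hg : Nat.gcd (m * c) n = c := by
      rw [hcd, mul_comm d c, mul_comm m c, Nat.gcd_mul_left, h4, mul_one]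
    refine ⟨⟨⟨Nat.one_le_iff_ne_zero.mpr (by positivity), by
        calc m * c ≤ d * c := Nat.mul_le_mul_right c h2
          _ = n := hcd.symm⟩, by
        calc 2 * (m * c) = (2 * m) * c := by ring
          _ ≤ d * c := Nat.mul_le_mul_right c h3
          _ = n := hcd.symm⟩, ?_⟩
    rw [hg]; exact hnc
  · intro k hk
    simp only [Finset.mem_filter, Finset.mem_Icc] at hk ⊢
    obtain ⟨⟨⟨h1, h2⟩, h3⟩, h4⟩ := hk
    have hg : Nat.gcd k n = c := by
      rw [← hc, ← h4, Nat.div_div_self (Nat.gcd_dvd_right k n) hn.ne']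
    have hck : c ∣ k := hg ▸ Nat.gcd_dvd_left k n
    have hkk : k / c * c = k := Nat.div_mul_cancel hck
    refine ⟨⟨(Nat.one_le_div_iff hc0).mpr (Nat.le_of_dvd (by omega) hck), ?_⟩, ?_, ?_⟩
    · rw [← hnc]; exact Nat.div_le_div_right h2
    · have h2c : 2 * (k / c) = 2 * k / c := (Nat.mul_div_assoc 2 hck).symm
      rw [h2c, ← hnc]
      exact Nat.div_le_div_right h3
    · have : Nat.gcd (k / c) d * c = c := by
        rw [← Nat.gcd_mul_right, hkk, ← hcd, hg]
      exact Nat.eq_of_mul_eq_mul_right hc0 (by rw [this, one_mul])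
  · intro m hm
    exact Nat.mul_div_cancel m hc0
  · intro k hk
    simp only [Finset.mem_filter, Finset.mem_Icc] at hk
    obtain ⟨⟨⟨h1, h2⟩, h3⟩, h4⟩ := hk
    have hg : Nat.gcd k n = c := by
      rw [← hc, ← h4, Nat.div_div_self (Nat.gcd_dvd_right k n) hn.ne']
    exact Nat.div_mul_cancel (hg ▸ Nat.gcd_dvd_left k n)

lemma tripart_total (n : ℕ) :
    (((Finset.Icc 1 n) ×ˢ (Finset.Icc 1 n) ×ˢ (Finset.Icc 1 n)).filter
      fun v => v.1 + v.2.1 + v.2.2 = n).card = (n - 1) * (n - 2) / 2 := by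
  -- biject with pairs (x,y) with 1 ≤ x,y and x+y < n
  have step1 : (((Finset.Icc 1 n) ×ˢ (Finset.Icc 1 n) ×ˢ (Finset.Icc 1 n)).filter
      fun v => v.1 + v.2.1 + v.2.2 = n).card
      = (((Finset.Icc 1 n) ×ˢ (Finset.Icc 1 n)).filter fun p => p.1 + p.2 < n).card := by
    refine Finset.card_bij' (fun v _ => (v.1, v.2.1)) (fun p _ => (p.1, p.2, n - p.1 - p.2))
      ?_ ?_ ?_ ?_
    · intro v hv
      simp only [Finset.mem_filter, Finset.mem_product, Finset.mem_Icc] at hv ⊢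
      omega
    · intro p hp
      simp only [Finset.mem_filter, Finset.mem_product, Finset.mem_Icc] at hp ⊢
      omega
    · intro v hv
      simp only [Finset.mem_filter, Finset.mem_product, Finset.mem_Icc] at hv
      obtain ⟨-, h⟩ := hv
      ext <;> simp <;> omega
    · intro p hp; rfl
  rw [step1]
  rw [Finset.card_eq_sum_card_fiberwise (f := Prod.fst) (t := Finset.Icc 1 n) (fun p hp => by
    simp only [Finset.mem_coe, Finset.mem_filter, Finset.mem_product] at hp; exact hp.1.1)]
  have step2 : ∀ x ∈ Finset.Icc 1 n,
      ((((Finset.Icc 1 n) ×ˢ (Finset.Icc 1 n)).filter fun p => p.1 + p.2 < n).filter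
        fun p => p.1 = x).card = n - 1 - x := by
    intro x hx
    simp only [Finset.mem_Icc] at hx
    have himg : ((((Finset.Icc 1 n) ×ˢ (Finset.Icc 1 n)).filter fun p => p.1 + p.2 < n).filter
        fun p => p.1 = x) = (Finset.Icc 1 (n - 1 - x)).image (fun y => (x, y)) := by
      ext ⟨u, v⟩
      simp only [Finset.mem_filter, Finset.mem_product, Finset.mem_Icc, Finset.mem_image,
        Prod.mk.injEq]
      constructor
      · rintro ⟨⟨⟨hu, hv⟩, hlt⟩, rfl⟩
        exact ⟨v, by omega, rfl, rfl⟩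
      · rintro ⟨y, hy, rfl, rfl⟩
        omega
    rw [himg, Finset.card_image_of_injective _ (fun a b h => by
      simpa using congrArg Prod.snd h), Nat.card_Icc]
    omega
  rw [Finset.sum_congr rfl step2]
  -- ∑ x in Icc 1 n, (n - 1 - x) = (n-1)(n-2)/2
  rw [← Finset.Ico_add_one_right_eq_Icc, Finset.sum_Ico_eq_sum_range]
  have : ∀ i ∈ Finset.range (n + 1 - 1), n - 1 - (1 + i) = (fun j => j - 1) (n - 1 - i) := by
    intro i _; simp only; omega
  rw [Finset.sum_congr rfl this]
  simp only [Nat.add_sub_cancel]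
  rw [Finset.sum_range_reflect (fun j => j - 1) n]
  cases n with
  | zero => simp
  | succ m =>
    rw [Finset.sum_range_succ']
    simp only [Nat.add_sub_cancel, Nat.zero_sub, add_zero]
    rw [Finset.sum_range_id]
    congr 1 <;> omega

lemma sum_tripartCount (n : ℕ) (hn : 0 < n) :
    ∑ d ∈ n.divisors, tripartCount d = (n - 1) * (n - 2) / 2 := by
  have hmaps : ∀ v ∈ (((Finset.Icc 1 n) ×ˢ (Finset.Icc 1 n) ×ˢ (Finset.Icc 1 n)).filter
      fun v => v.1 + v.2.1 + v.2.2 = n),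
      n / Nat.gcd (Nat.gcd v.1 v.2.1) v.2.2 ∈ n.divisors := by
    intro v hv
    simp only [Finset.mem_filter] at hv
    have hg : Nat.gcd (Nat.gcd v.1 v.2.1) v.2.2 ∣ n := by
      rw [← hv.2]
      exact Nat.dvd_add (Nat.dvd_add ((Nat.gcd_dvd_left _ _).trans (Nat.gcd_dvd_left _ _))
        ((Nat.gcd_dvd_left _ _).trans (Nat.gcd_dvd_right _ _))) (Nat.gcd_dvd_right _ _)
    exact Nat.mem_divisors.mpr ⟨Nat.div_dvd_of_dvd hg, hn.ne'⟩
  rw [← tripart_total n]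
  rw [Finset.card_eq_sum_card_fiberwise
    (f := fun v => n / Nat.gcd (Nat.gcd v.1 v.2.1) v.2.2) (t := n.divisors) (fun v hv => hmaps v (Finset.mem_coe.mp hv))]
  refine Finset.sum_congr rfl fun d hd => ?_
  obtain ⟨hdvd, -⟩ := Nat.mem_divisors.mp hd
  have hd0 : 0 < d := Nat.pos_of_mem_divisors hd
  obtain ⟨c, hcd⟩ := hdvd
  have hc : n / d = c := by rw [hcd, Nat.mul_div_cancel_left c hd0]
  have hc0 : 0 < c := by
    rcases Nat.eq_zero_or_pos c with h | h
    · rw [h, mul_zero] at hcd; omega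
    · exact h
  have hnc : n / c = d := by rw [hcd, Nat.mul_div_cancel d hc0]
  unfold tripartCount
  refine Finset.card_bij' (fun m _ => (m.1 * c, m.2.1 * c, m.2.2 * c))
    (fun v _ => (v.1 / c, v.2.1 / c, v.2.2 / c)) ?_ ?_ ?_ ?_
  · rintro ⟨x, y, z⟩ hm
    simp only [Finset.mem_filter, Finset.mem_product, Finset.mem_Icc] at hm ⊢
    obtain ⟨⟨hx1, hx2⟩, ⟨hy1, hy2⟩, hz1, hz2⟩ := hm.1
    obtain ⟨hsum, hgcd⟩ := hm.2
    have hg : Nat.gcd (Nat.gcd (x * c) (y * c)) (z * c) = c := by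
      rw [Nat.gcd_mul_right, Nat.gcd_mul_right, hgcd, one_mul]
    refine ⟨⟨⟨⟨Nat.one_le_iff_ne_zero.mpr (by positivity),
        (Nat.mul_le_mul_right c hx2).trans hcd.ge⟩,
        ⟨Nat.one_le_iff_ne_zero.mpr (by positivity),
        (Nat.mul_le_mul_right c hy2).trans hcd.ge⟩,
        ⟨Nat.one_le_iff_ne_zero.mpr (by positivity),
        (Nat.mul_le_mul_right c hz2).trans hcd.ge⟩⟩,
        by rw [← add_mul, ← add_mul, hsum, ← hcd]⟩, by rw [hg]; exact hnc⟩
  · rintro ⟨x, y, z⟩ hv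
    simp only [Finset.mem_filter, Finset.mem_product, Finset.mem_Icc] at hv ⊢
    obtain ⟨⟨⟨⟨hx1, hx2⟩, ⟨hy1, hy2⟩, hz1, hz2⟩, hsum⟩, hfib⟩ := hv
    set g := Nat.gcd (Nat.gcd x y) z with hgdef
    have hgdvd : g ∣ n := by
      rw [← hsum]
      exact Nat.dvd_add (Nat.dvd_add ((Nat.gcd_dvd_left _ _).trans (Nat.gcd_dvd_left _ _))
        ((Nat.gcd_dvd_left _ _).trans (Nat.gcd_dvd_right _ _))) (Nat.gcd_dvd_right _ _)
    have hg : g = c := by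
      rw [← hc, ← hfib, Nat.div_div_self hgdvd hn.ne']
    have hcx : c ∣ x := hg ▸ ((Nat.gcd_dvd_left _ _).trans (Nat.gcd_dvd_left _ _))
    have hcy : c ∣ y := hg ▸ ((Nat.gcd_dvd_left _ _).trans (Nat.gcd_dvd_right _ _))
    have hcz : c ∣ z := hg ▸ (Nat.gcd_dvd_right _ _)
    have hxx : x / c * c = x := Nat.div_mul_cancel hcx
    have hyy : y / c * c = y := Nat.div_mul_cancel hcy
    have hzz : z / c * c = z := Nat.div_mul_cancel hcz
    have hsum' : x / c + y / c + z / c = d := by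
      have : (x / c + y / c + z / c) * c = d * c := by
        rw [add_mul, add_mul, hxx, hyy, hzz, hsum, hcd]
      exact Nat.eq_of_mul_eq_mul_right hc0 this
    have hgcd' : Nat.gcd (Nat.gcd (x / c) (y / c)) (z / c) = 1 := by
      have : Nat.gcd (Nat.gcd (x / c) (y / c)) (z / c) * c = c := by
        rw [← Nat.gcd_mul_right, ← Nat.gcd_mul_right, hxx, hyy, hzz, ← hg]
      exact Nat.eq_of_mul_eq_mul_right hc0 (by rw [this, one_mul])
    exact ⟨⟨⟨(Nat.one_le_div_iff hc0).mpr (Nat.le_of_dvd (by omega) hcx),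
        hnc ▸ Nat.div_le_div_right hx2⟩,
      ⟨(Nat.one_le_div_iff hc0).mpr (Nat.le_of_dvd (by omega) hcy),
        hnc ▸ Nat.div_le_div_right hy2⟩,
      ⟨(Nat.one_le_div_iff hc0).mpr (Nat.le_of_dvd (by omega) hcz),
        hnc ▸ Nat.div_le_div_right hz2⟩⟩, hsum', hgcd'⟩
  · rintro ⟨x, y, z⟩ hm
    simp only [Prod.mk.injEq]
    exact ⟨Nat.mul_div_cancel x hc0, Nat.mul_div_cancel y hc0, Nat.mul_div_cancel z hc0⟩
  · rintro ⟨x, y, z⟩ hv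
    simp only [Finset.mem_filter, Finset.mem_product, Finset.mem_Icc] at hv
    obtain ⟨⟨-, hsum⟩, hfib⟩ := hv
    have hgdvd : Nat.gcd (Nat.gcd x y) z ∣ n := by
      rw [← hsum]
      exact Nat.dvd_add (Nat.dvd_add ((Nat.gcd_dvd_left _ _).trans (Nat.gcd_dvd_left _ _))
        ((Nat.gcd_dvd_left _ _).trans (Nat.gcd_dvd_right _ _))) (Nat.gcd_dvd_right _ _)
    have hg : Nat.gcd (Nat.gcd x y) z = c := by
      rw [← hc, ← hfib, Nat.div_div_self hgdvd hn.ne']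
    simp only [Prod.mk.injEq]
    exact ⟨Nat.div_mul_cancel (hg ▸ ((Nat.gcd_dvd_left _ _).trans (Nat.gcd_dvd_left _ _))),
      Nat.div_mul_cancel (hg ▸ ((Nat.gcd_dvd_left _ _).trans (Nat.gcd_dvd_right _ _))),
      Nat.div_mul_cancel (hg ▸ (Nat.gcd_dvd_right _ _))⟩


theorem principal_discriminant_count (a : ℕ) (ha : 2 ≤ a) :
    ((bipartCount a : ℤ) + (tripartCount a : ℤ)) = F a := by
  have key := (ArithmeticFunction.sum_eq_iff_sum_mul_moebius_eq (R := ℤ)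
      (f := fun d => (bipartCount d : ℤ) + (tripartCount d : ℤ))
      (g := fun n => ((n / 2 : ℕ) : ℤ) + (((n - 1) * (n - 2) / 2 : ℕ) : ℤ))).mp
      (fun n hn => by
        rw [Finset.sum_add_distrib, ← Nat.cast_sum, ← Nat.cast_sum,
          sum_bipartCount n hn, sum_tripartCount n hn]) a (by omega)
  rw [← key, F]
  exact Nat.sum_divisorsAntidiagonal' fun x y => (ArithmeticFunction.moebius x : ℤ) *
    (((y / 2 : ℕ) : ℤ) + (((y - 1) * (y - 2) / 2 : ℕ) : ℤ))
end

section
/- For every integer a ≥ 4, the number N of orbits of the action on E_1(a) of the group generated by S and T satisfies 6·N = 2·F(a) − φ(a); equivalently, N = F(a)/3 − φ(a)/6, where F(a) = Σ_{d ∣ a} μ(a/d)·(⌊d/2⌋ + (d−1)(d−2)/2). -/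
/-- The map `S(x,y,z) = (-x,-y,-z)`. -/
def Sm {n : ℕ} (v : ZMod n × ZMod n × ZMod n) : ZMod n × ZMod n × ZMod n :=
  (-v.1, -v.2.1, -v.2.2)

/-- The map `T(x,y,z) = (y,z,x)`. -/
def Tm {n : ℕ} (v : ZMod n × ZMod n × ZMod n) : ZMod n × ZMod n × ZMod n :=
  (v.2.1, v.2.2, v.1)

/-- `E_k(a)`: triples `(x,y,z)` of nonzero elements of `ℤ/aℤ` with `x+y+z = 0` whose
integer representatives satisfy `gcd(x̃,ỹ,z̃,a) = k`. -/
def Ek (a k : ℕ) : Set (ZMod a × ZMod a × ZMod a) :=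
  {v | v.1 ≠ 0 ∧ v.2.1 ≠ 0 ∧ v.2.2 ≠ 0 ∧ v.1 + v.2.1 + v.2.2 = 0 ∧
    Nat.gcd (Nat.gcd (Nat.gcd v.1.val v.2.1.val) v.2.2.val) a = k}

/-- Generating relation on `E_1(a)` for the action of the group generated by `S` and `T`:
its generated equivalence classes are exactly the `⟨S,T⟩`-orbits. -/
def triRel (a : ℕ) (α β : Ek a 1) : Prop :=
  (β : ZMod a × ZMod a × ZMod a) = Sm (α : ZMod a × ZMod a × ZMod a) ∨
  (β : ZMod a × ZMod a × ZMod a) = Tm (α : ZMod a × ZMod a × ZMod a)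

lemma dvd_gcd4_iff {u1 u2 u3 n d : ℕ} :
    d ∣ Nat.gcd (Nat.gcd (Nat.gcd u1 u2) u3) n ↔ d ∣ u1 ∧ d ∣ u2 ∧ d ∣ u3 ∧ d ∣ n := by
  simp [Nat.dvd_gcd_iff, and_assoc]

lemma gcd4_eq_of_iff {u1 u2 u3 v1 v2 v3 n : ℕ}
    (h : ∀ d, d ∣ n → ((d ∣ u1 ∧ d ∣ u2 ∧ d ∣ u3) ↔ (d ∣ v1 ∧ d ∣ v2 ∧ d ∣ v3))) :
    Nat.gcd (Nat.gcd (Nat.gcd u1 u2) u3) n = Nat.gcd (Nat.gcd (Nat.gcd v1 v2) v3) n := by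
  apply Nat.dvd_antisymm
  · have h1 := dvd_gcd4_iff.mp (dvd_refl (Nat.gcd (Nat.gcd (Nat.gcd u1 u2) u3) n))
    exact dvd_gcd4_iff.mpr ⟨((h _ h1.2.2.2).mp ⟨h1.1, h1.2.1, h1.2.2.1⟩).1,
      ((h _ h1.2.2.2).mp ⟨h1.1, h1.2.1, h1.2.2.1⟩).2.1,
      ((h _ h1.2.2.2).mp ⟨h1.1, h1.2.1, h1.2.2.1⟩).2.2, h1.2.2.2⟩
  · have h1 := dvd_gcd4_iff.mp (dvd_refl (Nat.gcd (Nat.gcd (Nat.gcd v1 v2) v3) n))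
    exact dvd_gcd4_iff.mpr ⟨((h _ h1.2.2.2).mpr ⟨h1.1, h1.2.1, h1.2.2.1⟩).1,
      ((h _ h1.2.2.2).mpr ⟨h1.1, h1.2.1, h1.2.2.1⟩).2.1,
      ((h _ h1.2.2.2).mpr ⟨h1.1, h1.2.1, h1.2.2.1⟩).2.2, h1.2.2.2⟩

lemma dvd_val_neg_iff {n : ℕ} [NeZero n] {x : ZMod n} (hx : x ≠ 0) {d : ℕ} (hd : d ∣ n) :
    d ∣ (-x).val ↔ d ∣ x.val := by
  haveI : NeZero x := ⟨hx⟩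
  rw [ZMod.val_neg_of_ne_zero]
  constructor
  · intro h
    have := (Nat.dvd_sub hd h)
    rwa [Nat.sub_sub_self (le_of_lt (ZMod.val_lt x))] at this
  · intro h
    exact Nat.dvd_sub hd h

lemma memS {a k : ℕ} [NeZero a] {v : ZMod a × ZMod a × ZMod a} (hv : v ∈ Ek a k) :
    Sm v ∈ Ek a k := by
  obtain ⟨h1, h2, h3, hs, hg⟩ := hv
  refine ⟨neg_ne_zero.mpr h1, neg_ne_zero.mpr h2, neg_ne_zero.mpr h3, ?_, ?_⟩
  · show -v.1 + -v.2.1 + -v.2.2 = 0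
    rw [← neg_add, ← neg_add, hs, neg_zero]
  · show Nat.gcd (Nat.gcd (Nat.gcd (-v.1).val (-v.2.1).val) (-v.2.2).val) a = k
    rw [← hg]
    exact gcd4_eq_of_iff (fun d hd => by
      rw [dvd_val_neg_iff h1 hd, dvd_val_neg_iff h2 hd, dvd_val_neg_iff h3 hd])

lemma memT {a k : ℕ} {v : ZMod a × ZMod a × ZMod a} (hv : v ∈ Ek a k) :
    Tm v ∈ Ek a k := by
  obtain ⟨h1, h2, h3, hs, hg⟩ := hv
  refine ⟨h2, h3, h1, ?_, ?_⟩
  · show v.2.1 + v.2.2 + v.1 = 0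
    rw [← hs]; ring
  · show Nat.gcd (Nat.gcd (Nat.gcd v.2.1.val v.2.2.val) v.1.val) a = k
    rw [← hg]
    congr 1
    rw [Nat.gcd_comm (Nat.gcd v.2.1.val v.2.2.val) v.1.val, ← Nat.gcd_assoc]

lemma cast_mul_val {a : ℕ} [NeZero a] (k : ℕ) (x : ZMod a) :
    ((k * x.val : ℕ) : ZMod a) = (k : ZMod a) * x := by
  push_cast [ZMod.natCast_zmod_val]; ring

lemma fixA {a : ℕ} [NeZero a] (ha : 4 ≤ a) {v : ZMod a × ZMod a × ZMod a}
    (hv : v ∈ Ek a 1) (hxy : v.1 = v.2.1) (hyz : v.2.1 = v.2.2) : False := by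
  obtain ⟨h1, h2, h3, hs, hg⟩ := hv
  rw [← hxy, ← hyz, ← hxy] at hs
  have h3x : ((3 * v.1.val : ℕ) : ZMod a) = 0 := by
    rw [cast_mul_val]; push_cast; linear_combination hs
  have hdvd : a ∣ 3 * v.1.val := (ZMod.natCast_eq_zero_iff _ _).mp h3x
  rw [← hxy, ← hyz, ← hxy, Nat.gcd_self, Nat.gcd_self] at hg
  have hco : Nat.Coprime a v.1.val := Nat.coprime_comm.mp hg
  have : a ∣ 3 := hco.dvd_of_dvd_mul_right hdvd
  have := Nat.le_of_dvd (by norm_num) this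
  omega

lemma two_val {a : ℕ} [NeZero a] {x : ZMod a} (hx : x ≠ 0) (h : x + x = 0) :
    2 * x.val = a := by
  have h2x : ((2 * x.val : ℕ) : ZMod a) = 0 := by
    rw [cast_mul_val]; push_cast; linear_combination h
  have hdvd : a ∣ 2 * x.val := (ZMod.natCast_eq_zero_iff _ _).mp h2x
  have hlt : x.val < a := ZMod.val_lt x
  have hne : x.val ≠ 0 := fun h0 => hx ((ZMod.val_eq_zero x).mp h0)
  obtain ⟨c, hc⟩ := hdvd
  have hc2 : c < 2 := by
    by_contra hcon
    push_neg at hcon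
    have : a * 2 ≤ a * c := Nat.mul_le_mul_left a hcon
    omega
  interval_cases c <;> omega

lemma fixB {a : ℕ} [NeZero a] (ha : 4 ≤ a) {v : ZMod a × ZMod a × ZMod a}
    (hv : v ∈ Ek a 1) (h2x : v.1 + v.1 = 0) (h2y : v.2.1 + v.2.1 = 0)
    (h2z : v.2.2 + v.2.2 = 0) : False := by
  obtain ⟨h1, h2, h3, hs, hg⟩ := hv
  have ex := two_val h1 h2x
  have ey := two_val h2 h2y
  have ez := two_val h3 h2z
  have hxy : v.2.1.val = v.1.val := by omega
  have hxz : v.2.2.val = v.1.val := by omega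
  rw [hxy, hxz, Nat.gcd_self, Nat.gcd_self] at hg
  have : Nat.gcd v.1.val a = v.1.val := Nat.gcd_eq_left ⟨2, by omega⟩
  omega

def orb {n : ℕ} (α β : ZMod n × ZMod n × ZMod n) : Prop :=
  β = α ∨ β = Tm α ∨ β = Tm (Tm α) ∨ β = Sm α ∨ β = Sm (Tm α) ∨ β = Sm (Tm (Tm α))

lemma orb_refl {n : ℕ} (α : ZMod n × ZMod n × ZMod n) : orb α α := Or.inl rfl

lemma orb_symm {n : ℕ} {α β : ZMod n × ZMod n × ZMod n} (h : orb α β) : orb β α := by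
  obtain ⟨x, y, z⟩ := α
  rcases h with h|h|h|h|h|h <;> subst h <;> simp [orb, Sm, Tm, neg_neg]

lemma orb_trans {n : ℕ} {α β γ : ZMod n × ZMod n × ZMod n} (h1 : orb α β) (h2 : orb β γ) :
    orb α γ := by
  obtain ⟨x, y, z⟩ := α
  rcases h2 with g|g|g|g|g|g <;> rcases h1 with h|h|h|h|h|h <;> subst h <;> subst g <;>
    simp [orb, Sm, Tm, neg_neg]

lemma eqvGen_iff_orb {a : ℕ} [NeZero a] {α β : Ek a 1} :
    Relation.EqvGen (triRel a) α β ↔ orb (α : ZMod a × ZMod a × ZMod a) β := by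
  constructor
  · intro h
    induction h with
    | rel x y hxy =>
      rcases hxy with h|h
      · exact Or.inr (Or.inr (Or.inr (Or.inl h)))
      · exact Or.inr (Or.inl h)
    | refl x => exact orb_refl _
    | symm x y _ ih => exact orb_symm ih
    | trans x y z _ _ ih1 ih2 => exact orb_trans ih1 ih2
  · intro h
    have hT : ∀ γ : Ek a 1, triRel a γ ⟨Tm γ, memT γ.2⟩ := fun γ => Or.inr rfl
    set αT : Ek a 1 := ⟨Tm α, memT α.2⟩ with hαT
    set αTT : Ek a 1 := ⟨Tm (Tm α), memT (memT α.2)⟩ with hαTT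
    rcases h with h|h|h|h|h|h
    · have hab : α = β := Subtype.ext h.symm
      exact hab ▸ Relation.EqvGen.refl α
    · exact Relation.EqvGen.rel _ _ (Or.inr h)
    · exact Relation.EqvGen.trans _ _ _ (Relation.EqvGen.rel _ _ (hT α))
        (Relation.EqvGen.rel _ _ (Or.inr (show (β : ZMod a × ZMod a × ZMod a) = Tm αT from h)))
    · exact Relation.EqvGen.rel _ _ (Or.inl h)
    · exact Relation.EqvGen.trans _ _ _ (Relation.EqvGen.rel _ _ (hT α))
        (Relation.EqvGen.rel _ _ (Or.inl (show (β : ZMod a × ZMod a × ZMod a) = Sm αT from h)))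
    · exact Relation.EqvGen.trans _ _ _
        (Relation.EqvGen.trans _ _ _ (Relation.EqvGen.rel _ _ (hT α))
          (Relation.EqvGen.rel _ _ (show triRel a αT αTT from Or.inr rfl)))
        (Relation.EqvGen.rel _ _ (Or.inl (show (β : ZMod a × ZMod a × ZMod a) = Sm αTT from h)))

def mw {n : ℕ} : Fin 6 → (ZMod n × ZMod n × ZMod n) → (ZMod n × ZMod n × ZMod n)
  | 0, v => v
  | 1, v => Tm v
  | 2, v => Tm (Tm v)
  | 3, v => Sm v
  | 4, v => Sm (Tm v)
  | 5, v => Sm (Tm (Tm v))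

lemma mw_mem {a : ℕ} [NeZero a] {v : ZMod a × ZMod a × ZMod a} (hv : v ∈ Ek a 1) (i : Fin 6) :
    mw i v ∈ Ek a 1 := by
  fin_cases i
  · exact hv
  · exact memT hv
  · exact memT (memT hv)
  · exact memS hv
  · exact memS (memT hv)
  · exact memS (memT (memT hv))

lemma orb_iff_mw {n : ℕ} {α β : ZMod n × ZMod n × ZMod n} :
    orb α β ↔ ∃ i : Fin 6, β = mw i α := by
  constructor
  · intro h
    rcases h with h|h|h|h|h|h
    exacts [⟨0, h⟩, ⟨1, h⟩, ⟨2, h⟩, ⟨3, h⟩, ⟨4, h⟩, ⟨5, h⟩]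
  · rintro ⟨i, rfl⟩
    fin_cases i
    · exact Or.inl rfl
    · exact Or.inr (Or.inl rfl)
    · exact Or.inr (Or.inr (Or.inl rfl))
    · exact Or.inr (Or.inr (Or.inr (Or.inl rfl)))
    · exact Or.inr (Or.inr (Or.inr (Or.inr (Or.inl rfl))))
    · exact Or.inr (Or.inr (Or.inr (Or.inr (Or.inr rfl))))

lemma pair_ne {a : ℕ} [NeZero a] (ha : 4 ≤ a) {v : ZMod a × ZMod a × ZMod a}
    (hv : v ∈ Ek a 1) : ∀ i j : Fin 6, i < j → mw i v ≠ mw j v := by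
  obtain ⟨x, y, z⟩ := v
  have h1 : x ≠ 0 := hv.1
  have h2 : y ≠ 0 := hv.2.1
  have h3 : z ≠ 0 := hv.2.2.1
  have hsum : x + y + z = 0 := hv.2.2.2.1
  intro i j hlt
  fin_cases i <;> fin_cases j <;> try exact absurd hlt (by decide)
  all_goals intro h
  all_goals simp only [mw, Tm, Sm, Prod.mk.injEq] at h
  all_goals obtain ⟨e1, e2, e3⟩ := h
  -- (0,1)
  · exact fixA ha hv e1 e2
  -- (0,2)
  · exact fixA ha hv e2.symm e3.symm
  -- (0,3)
  · exact fixB ha hv (by linear_combination e1) (by linear_combination e2)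
      (by linear_combination e3)
  -- (0,4)
  · exact h1 (by linear_combination hsum - e2)
  -- (0,5)
  · exact h1 (by linear_combination hsum - e3)
  -- (1,2)
  · exact fixA ha hv e3 e1
  -- (1,3)
  · exact h1 (by linear_combination hsum - e2)
  -- (1,4)
  · exact fixB ha hv (by linear_combination e3) (by linear_combination e1)
      (by linear_combination e2)
  -- (1,5)
  · exact h1 (by linear_combination hsum - e1)
  -- (2,3)
  · exact h1 (by linear_combination hsum - e3)
  -- (2,4)
  · exact h1 (by linear_combination hsum - e1)
  -- (2,5)
  · exact fixB ha hv (by linear_combination e2) (by linear_combination e3)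
      (by linear_combination e1)
  -- (3,4)
  · exact fixA ha hv (by linear_combination -e1) (by linear_combination -e2)
  -- (3,5)
  · exact fixA ha hv (by linear_combination e2) (by linear_combination e3)
  -- (4,5)
  · exact fixA ha hv (by linear_combination -e3) (by linear_combination -e1)

lemma orbit_count {a : ℕ} (ha : 4 ≤ a) :
    Nat.card (Ek a 1) = 6 * Nat.card (Quot (triRel a)) := by
  haveI : NeZero a := ⟨by omega⟩
  classical
  haveI : Fintype (Ek a 1) := Fintype.ofFinite _
  haveI : Finite (Quot (triRel a)) := Finite.of_surjective _ Quot.mk_surjective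
  haveI : Fintype (Quot (triRel a)) := Fintype.ofFinite _
  rw [Nat.card_eq_fintype_card, Nat.card_eq_fintype_card, ← Finset.card_univ,
    ← Finset.card_univ,
    Finset.card_eq_sum_card_fiberwise
      (f := fun v : Ek a 1 => Quot.mk (triRel a) v) (t := Finset.univ)
      (fun x _ => Finset.mem_univ _)]
  have key : ∀ q : Quot (triRel a),
      (Finset.univ.filter fun v : Ek a 1 => Quot.mk (triRel a) v = q).card = 6 := by
    intro q
    obtain ⟨v, rfl⟩ := Quot.exists_rep q
    apply Finset.card_eq_of_bijective
      (f := fun i hi => (⟨mw ⟨i, hi⟩ (v : ZMod a × ZMod a × ZMod a), mw_mem v.2 _⟩ : Ek a 1))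
    · intro w hw
      rw [Finset.mem_filter] at hw
      have heq : Relation.EqvGen (triRel a) v w :=
        (Relation.EqvGen.symm _ _ (Quot.eq.mp hw.2))
      have horb : orb (v : ZMod a × ZMod a × ZMod a) w := eqvGen_iff_orb.mp heq
      obtain ⟨i, hi⟩ := orb_iff_mw.mp horb
      exact ⟨i.val, i.isLt, by
        apply Subtype.ext
        simpa using hi.symm⟩
    · intro i hi
      rw [Finset.mem_filter]
      refine ⟨Finset.mem_univ _, ?_⟩
      rw [Quot.eq]
      apply Relation.EqvGen.symm
      exact eqvGen_iff_orb.mpr (orb_iff_mw.mpr ⟨⟨i, hi⟩, rfl⟩)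
    · intro i j hi hj hij
      have : mw ⟨i, hi⟩ (v : ZMod a × ZMod a × ZMod a) = mw ⟨j, hj⟩ (v : ZMod a × ZMod a × ZMod a) :=
        congrArg Subtype.val hij
      rcases lt_trichotomy i j with h | h | h
      · exact absurd this (pair_ne ha v.2 _ _ (by simpa using h))
      · exact h
      · exact absurd this.symm (pair_ne ha v.2 _ _ (by simpa using h))
  rw [Finset.sum_congr rfl (fun q _ => key q), Finset.sum_const, Finset.card_univ, smul_eq_mul,
    mul_comm]

def En (n : ℕ) : Set (ZMod n × ZMod n × ZMod n) :=
  {v | v.1 ≠ 0 ∧ v.2.1 ≠ 0 ∧ v.2.2 ≠ 0 ∧ v.1 + v.2.1 + v.2.2 = 0}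

lemma card_En {n : ℕ} [NeZero n] : Nat.card (En n) = (n - 1) * (n - 2) := by
  classical
  -- equiv to pairs
  have e1 : En n ≃ {p : ZMod n × ZMod n // p.1 ≠ 0 ∧ p.2 ≠ 0 ∧ p.1 + p.2 ≠ 0} :=
    { toFun := fun v => ⟨(v.val.1, v.val.2.1), v.prop.1, v.prop.2.1, by
        intro h
        apply v.prop.2.2.1
        have := v.prop.2.2.2
        linear_combination this - h⟩
      invFun := fun p => ⟨(p.val.1, p.val.2, -p.val.1 - p.val.2), p.prop.1, p.prop.2.1, by
        intro h
        exact p.prop.2.2 (by linear_combination -h), by ring⟩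
      left_inv := fun v => by
        apply Subtype.ext
        obtain ⟨⟨x, y, z⟩, hv⟩ := v
        have : z = -x - y := by linear_combination hv.2.2.2
        simp [this]
      right_inv := fun p => rfl }
  have e2 : {p : ZMod n × ZMod n // p.1 ≠ 0 ∧ p.2 ≠ 0 ∧ p.1 + p.2 ≠ 0} ≃
      Σ x : {x : ZMod n // x ≠ 0}, {y : ZMod n // y ≠ 0 ∧ (x : ZMod n) + y ≠ 0} :=
    { toFun := fun p => ⟨⟨p.val.1, p.prop.1⟩, ⟨p.val.2, p.prop.2.1, p.prop.2.2⟩⟩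
      invFun := fun s => ⟨(s.1.val, s.2.val), s.1.prop, s.2.prop.1, s.2.prop.2⟩
      left_inv := fun p => rfl
      right_inv := fun s => rfl }
  rw [Nat.card_congr (e1.trans e2)]
  rw [Nat.card_eq_fintype_card, Fintype.card_sigma]
  have hfib : ∀ x : {x : ZMod n // x ≠ 0},
      Fintype.card {y : ZMod n // y ≠ 0 ∧ (x : ZMod n) + y ≠ 0} = n - 2 := by
    intro ⟨x, hx⟩
    rw [Fintype.card_subtype]
    have hset : (Finset.univ.filter fun y : ZMod n => y ≠ 0 ∧ x + y ≠ 0) =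
        (Finset.univ.erase (-x)).erase 0 := by
      ext y
      simp only [Finset.mem_filter, Finset.mem_erase, Finset.mem_univ, and_true, true_and]
      constructor
      · rintro ⟨hy0, hxy⟩
        exact ⟨hy0, fun hyx => hxy (by rw [hyx]; ring)⟩
      · rintro ⟨hy0, hyx⟩
        exact ⟨hy0, fun hxy => hyx (by linear_combination hxy)⟩
    rw [hset, Finset.card_erase_of_mem, Finset.card_erase_of_mem (Finset.mem_univ _),
      Finset.card_univ, ZMod.card]
    · rfl
    · exact Finset.mem_erase.mpr ⟨fun h0 => hx (neg_eq_zero.mp h0.symm), Finset.mem_univ _⟩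
  rw [Finset.sum_congr rfl (fun x _ => hfib x), Finset.sum_const, Finset.card_univ, smul_eq_mul]
  congr 1
  rw [Fintype.card_subtype]
  rw [show (Finset.univ.filter fun x : ZMod n => x ≠ 0) = Finset.univ.erase 0 by
    ext x; simp [Finset.mem_erase]]
  rw [Finset.card_erase_of_mem (Finset.mem_univ _), Finset.card_univ, ZMod.card]

lemma card_Ek_eq {d m : ℕ} (hd : 0 < d) [NeZero m] :
    Nat.card (Ek (d * m) d) = Nat.card (Ek m 1) := by
  haveI : NeZero (d * m) := ⟨Nat.mul_ne_zero hd.ne' (NeZero.ne m)⟩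
  symm
  set ψ : ZMod m → ZMod (d * m) := fun t => ((d * t.val : ℕ) : ZMod (d * m)) with hψ
  have f1 : ∀ t : ZMod m, (ψ t).val = d * t.val := by
    intro t
    exact ZMod.val_cast_of_lt ((mul_lt_mul_iff_right₀ hd).mpr (ZMod.val_lt t))
  have f2 : ∀ t : ZMod m, ψ t = 0 ↔ t = 0 := by
    intro t
    rw [hψ]
    simp only [ZMod.natCast_eq_zero_iff]
    rw [Nat.mul_dvd_mul_iff_left hd]
    constructor
    · intro h
      have := Nat.eq_zero_of_dvd_of_lt h (ZMod.val_lt t)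
      exact (ZMod.val_eq_zero t).mp this
    · intro h
      simp [h]
  have fsum : ∀ x y z : ZMod m, x + y + z = 0 → ψ x + ψ y + ψ z = 0 := by
    intro x y z hs
    have hm : m ∣ x.val + y.val + z.val := by
      rw [← ZMod.natCast_eq_zero_iff]
      push_cast [ZMod.natCast_zmod_val]
      exact hs
    have : ψ x + ψ y + ψ z = ((d * (x.val + y.val + z.val) : ℕ) : ZMod (d * m)) := by
      simp only [hψ]; push_cast; ring
    rw [this, ZMod.natCast_eq_zero_iff]
    exact Nat.mul_dvd_mul_left d hm
  have fmem : ∀ v : ZMod m × ZMod m × ZMod m, v ∈ Ek m 1 →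
      (ψ v.1, ψ v.2.1, ψ v.2.2) ∈ Ek (d * m) d := by
    rintro ⟨x, y, z⟩ ⟨h1, h2, h3, hs, hg⟩
    refine ⟨fun h => h1 ((f2 x).mp h), fun h => h2 ((f2 y).mp h), fun h => h3 ((f2 z).mp h),
      fsum x y z hs, ?_⟩
    show Nat.gcd (Nat.gcd (Nat.gcd (ψ x).val (ψ y).val) (ψ z).val) (d * m) = d
    rw [f1, f1, f1, Nat.gcd_mul_left, Nat.gcd_mul_left, Nat.gcd_mul_left]
    rw [hg]
    exact mul_one d
  have ψinj : Function.Injective ψ := by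
    intro s t h
    have h2 : d * s.val = d * t.val := by rw [← f1 s, ← f1 t, h]
    exact ZMod.val_injective m (Nat.eq_of_mul_eq_mul_left hd h2)
  let Φ : Ek m 1 → Ek (d * m) d := fun v => ⟨(ψ v.val.1, ψ v.val.2.1, ψ v.val.2.2), fmem _ v.prop⟩
  have hinj : Function.Injective Φ := by
    intro v w h
    have h' := congrArg Subtype.val h
    rw [Prod.ext_iff, Prod.ext_iff] at h'
    exact Subtype.ext (Prod.ext (ψinj h'.1) (Prod.ext (ψinj h'.2.1) (ψinj h'.2.2)))
  have hsurj : Function.Surjective Φ := by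
    rintro ⟨⟨X, Y, Z⟩, H1, H2, H3, HS, HG⟩
    have HG' : Nat.gcd (Nat.gcd (Nat.gcd (ZMod.val X) (ZMod.val Y)) (ZMod.val Z)) (d * m) = d :=
      HG
    have hdX : d ∣ X.val := by
      have h := dvd_trans (Nat.gcd_dvd_left _ (d * m)) (dvd_trans (Nat.gcd_dvd_left _ Z.val)
        (Nat.gcd_dvd_left X.val Y.val))
      rwa [HG'] at h
    have hdY : d ∣ Y.val := by
      have h := dvd_trans (Nat.gcd_dvd_left _ (d * m)) (dvd_trans (Nat.gcd_dvd_left _ Z.val)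
        (Nat.gcd_dvd_right X.val Y.val))
      rwa [HG'] at h
    have hdZ : d ∣ Z.val := by
      have h := dvd_trans (Nat.gcd_dvd_left ((X.val.gcd Y.val).gcd Z.val) (d * m))
        (Nat.gcd_dvd_right (X.val.gcd Y.val) Z.val)
      rwa [HG'] at h
    obtain ⟨ux, hux⟩ := hdX
    obtain ⟨uy, huy⟩ := hdY
    obtain ⟨uz, huz⟩ := hdZ
    have hxlt : ux < m := by
      have := ZMod.val_lt X
      rw [hux] at this
      exact lt_of_mul_lt_mul_left this (le_of_lt hd)
    have hylt : uy < m := by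
      have := ZMod.val_lt Y
      rw [huy] at this
      exact lt_of_mul_lt_mul_left this (le_of_lt hd)
    have hzlt : uz < m := by
      have := ZMod.val_lt Z
      rw [huz] at this
      exact lt_of_mul_lt_mul_left this (le_of_lt hd)
    have hvx : ((ux : ZMod m)).val = ux := ZMod.val_cast_of_lt hxlt
    have hvy : ((uy : ZMod m)).val = uy := ZMod.val_cast_of_lt hylt
    have hvz : ((uz : ZMod m)).val = uz := ZMod.val_cast_of_lt hzlt
    have hpx : ψ (ux : ZMod m) = X := by
      rw [hψ]
      show ((d * (ux : ZMod m).val : ℕ) : ZMod (d * m)) = X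
      rw [hvx, ← hux, ZMod.natCast_zmod_val]
    have hpy : ψ (uy : ZMod m) = Y := by
      rw [hψ]
      show ((d * (uy : ZMod m).val : ℕ) : ZMod (d * m)) = Y
      rw [hvy, ← huy, ZMod.natCast_zmod_val]
    have hpz : ψ (uz : ZMod m) = Z := by
      rw [hψ]
      show ((d * (uz : ZMod m).val : ℕ) : ZMod (d * m)) = Z
      rw [hvz, ← huz, ZMod.natCast_zmod_val]
    have hmem : ((ux : ZMod m), (uy : ZMod m), (uz : ZMod m)) ∈ Ek m 1 := by
      refine ⟨?_, ?_, ?_, ?_, ?_⟩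
      · show (ux : ZMod m) ≠ 0
        intro h0
        apply H1
        show X = 0
        rw [← hpx, h0]
        exact (f2 0).mpr rfl
      · show (uy : ZMod m) ≠ 0
        intro h0
        apply H2
        show Y = 0
        rw [← hpy, h0]
        exact (f2 0).mpr rfl
      · show (uz : ZMod m) ≠ 0
        intro h0
        apply H3
        show Z = 0
        rw [← hpz, h0]
        exact (f2 0).mpr rfl
      · have hdvd : d * m ∣ X.val + Y.val + Z.val := by
          rw [← ZMod.natCast_eq_zero_iff]
          push_cast [ZMod.natCast_zmod_val]
          exact HS
        rw [hux, huy, huz, ← Nat.mul_add, ← Nat.mul_add,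
          Nat.mul_dvd_mul_iff_left hd] at hdvd
        have : ((ux + uy + uz : ℕ) : ZMod m) = 0 :=
          (ZMod.natCast_eq_zero_iff _ _).mpr hdvd
        push_cast at this
        exact this
      · show Nat.gcd (Nat.gcd (Nat.gcd (ux : ZMod m).val (uy : ZMod m).val)
          (uz : ZMod m).val) m = 1
        rw [hvx, hvy, hvz]
        apply Nat.eq_of_mul_eq_mul_left hd
        rw [← Nat.gcd_mul_left, ← Nat.gcd_mul_left, ← Nat.gcd_mul_left,
          ← hux, ← huy, ← huz, HG', mul_one]
    refine ⟨⟨((ux : ZMod m), (uy : ZMod m), (uz : ZMod m)), hmem⟩, ?_⟩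
    apply Subtype.ext
    show (ψ (ux : ZMod m), ψ (uy : ZMod m), ψ (uz : ZMod m)) = (X, Y, Z)
    rw [hpx, hpy, hpz]
  exact Nat.card_congr (Equiv.ofBijective Φ ⟨hinj, hsurj⟩)

lemma sum_card_Ek {n : ℕ} [NeZero n] :
    ∑ d ∈ n.divisors, Nat.card (Ek n d) = (n - 1) * (n - 2) := by
  classical
  have key : ∀ S : Set (ZMod n × ZMod n × ZMod n),
      Nat.card S = (Finset.univ.filter (· ∈ S)).card := by
    intro S
    rw [Nat.card_eq_fintype_card]
    exact Fintype.card_subtype _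
  rw [← card_En (n := n), key (En n)]
  rw [Finset.card_eq_sum_card_fiberwise
    (f := fun v : ZMod n × ZMod n × ZMod n =>
      Nat.gcd (Nat.gcd (Nat.gcd v.1.val v.2.1.val) v.2.2.val) n)
    (t := n.divisors)
    (fun v hv => Nat.mem_divisors.mpr ⟨Nat.gcd_dvd_right _ _, NeZero.ne n⟩)]
  apply Finset.sum_congr rfl
  intro d hd
  rw [key (Ek n d)]
  congr 1
  ext v
  simp only [Finset.mem_filter, Finset.mem_univ, true_and, En, Ek, Set.mem_setOf_eq, and_assoc]

lemma sum_divisors_cardE1 {n : ℕ} (hn : 0 < n) :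
    ∑ e ∈ n.divisors, Nat.card (Ek e 1) = (n - 1) * (n - 2) := by
  haveI : NeZero n := ⟨hn.ne'⟩
  rw [← Nat.sum_div_divisors n (fun e => Nat.card (Ek e 1))]
  rw [← sum_card_Ek (n := n)]
  apply Finset.sum_congr rfl
  intro d hd
  obtain ⟨hdvd, -⟩ := Nat.mem_divisors.mp hd
  have hdpos : 0 < d := Nat.pos_of_dvd_of_pos hdvd hn
  haveI : NeZero (n / d) := ⟨(Nat.div_pos (Nat.le_of_dvd hn hdvd) hdpos).ne'⟩
  have h := card_Ek_eq (d := d) (m := n / d) hdpos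
  rw [Nat.mul_div_cancel' hdvd] at h
  exact h.symm

lemma moebius_cardE1 {a : ℕ} (ha : 0 < a) :
    (Nat.card (Ek a 1) : ℤ) =
      ∑ d ∈ a.divisors, ArithmeticFunction.moebius (a / d) * (((d - 1) * (d - 2) : ℕ) : ℤ) := by
  have H := (ArithmeticFunction.sum_eq_iff_sum_smul_moebius_eq
    (f := fun e => (Nat.card (Ek e 1) : ℤ))
    (g := fun n => (((n - 1) * (n - 2) : ℕ) : ℤ))).mp ?_ a ha
  · rw [← H, Nat.sum_divisorsAntidiagonal'
      (f := fun i j => ArithmeticFunction.moebius i • ((((j - 1) * (j - 2) : ℕ)) : ℤ))]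
    simp [zsmul_eq_mul]
  · intro n hn
    rw [← Nat.cast_sum]
    exact_mod_cast congrArg (Nat.cast : ℕ → ℤ) (sum_divisors_cardE1 hn)

lemma moebius_totient {a : ℕ} (ha : 0 < a) :
    (Nat.totient a : ℤ) =
      ∑ d ∈ a.divisors, ArithmeticFunction.moebius (a / d) * (d : ℤ) := by
  have H := (ArithmeticFunction.sum_eq_iff_sum_smul_moebius_eq
    (f := fun e => (Nat.totient e : ℤ))
    (g := fun n => (n : ℤ))).mp ?_ a ha
  · rw [← H, Nat.sum_divisorsAntidiagonal'
      (f := fun i j => ArithmeticFunction.moebius i • ((j : ℤ)))]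
    simp [zsmul_eq_mul]
  · intro n hn
    rw [← Nat.cast_sum]
    exact_mod_cast congrArg (Nat.cast : ℕ → ℤ) (Nat.sum_totient n)

lemma moebius_parity {a : ℕ} (ha : 4 ≤ a) :
    ∑ d ∈ a.divisors, ArithmeticFunction.moebius (a / d) * ((d % 2 : ℕ) : ℤ) = 0 := by
  have H := (ArithmeticFunction.sum_eq_iff_sum_smul_moebius_eq
    (f := fun n => if n = 1 then (1 : ℤ) else if n = 2 then -1 else 0)
    (g := fun n => ((n % 2 : ℕ) : ℤ))).mp ?_ a (by omega)
  · have h0 : (if a = 1 then (1 : ℤ) else if a = 2 then -1 else 0) = 0 := by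
      rw [if_neg (by omega), if_neg (by omega)]
    rw [← h0, ← H, Nat.sum_divisorsAntidiagonal'
      (f := fun i j => ArithmeticFunction.moebius i • (((j % 2 : ℕ)) : ℤ))]
    simp [zsmul_eq_mul]
  · intro n hn
    have hsplit : ∀ d : ℕ, (if d = 1 then (1 : ℤ) else if d = 2 then -1 else 0) =
        (if d = 1 then (1 : ℤ) else 0) + (if d = 2 then (-1 : ℤ) else 0) := by
      intro d
      by_cases h1 : d = 1
      · rw [if_pos h1, if_pos h1, if_neg (by omega), add_zero]
      · rw [if_neg h1, if_neg h1, zero_add]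
    rw [Finset.sum_congr rfl (fun d _ => hsplit d), Finset.sum_add_distrib,
      Finset.sum_ite_eq' n.divisors 1 (fun _ => (1 : ℤ)),
      Finset.sum_ite_eq' n.divisors 2 (fun _ => (-1 : ℤ)),
      if_pos (Nat.one_mem_divisors.mpr hn.ne')]
    by_cases h2 : 2 ∣ n
    · rw [if_pos (Nat.mem_divisors.mpr ⟨h2, hn.ne'⟩)]
      have hm : n % 2 = 0 := by omega
      rw [hm]
      norm_num
    · rw [if_neg (fun hmem => h2 (Nat.mem_divisors.mp hmem).1)]
      have hm : n % 2 = 1 := by omega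
      rw [hm]
      norm_num

theorem triangle_chamber_count (a : ℕ) (ha : 4 ≤ a) :
    6 * (Nat.card (Quot (triRel a)) : ℤ) = 2 * F a - (Nat.totient a : ℤ) := by
  have ha0 : 0 < a := by omega
  have hL : 6 * (Nat.card (Quot (triRel a)) : ℤ) = (Nat.card (Ek a 1) : ℤ) := by
    rw [orbit_count ha]
    push_cast
    ring
  rw [hL, moebius_cardE1 ha0, moebius_totient ha0]
  have key : ∀ d ∈ a.divisors,
      2 * (ArithmeticFunction.moebius (a / d) *
          (((d / 2 : ℕ) : ℤ) + (((d - 1) * (d - 2) / 2 : ℕ) : ℤ))) =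
      (ArithmeticFunction.moebius (a / d) * (((d - 1) * (d - 2) : ℕ) : ℤ)
        + ArithmeticFunction.moebius (a / d) * (d : ℤ))
      - ArithmeticFunction.moebius (a / d) * ((d % 2 : ℕ) : ℤ) := by
    intro d hd
    have hd1 : 1 ≤ d := Nat.pos_of_mem_divisors hd
    have he : 2 ∣ (d - 1) * (d - 2) := by
      rcases Nat.even_or_odd (d - 1) with h | h
      · exact Dvd.dvd.mul_right h.two_dvd _
      · have h2 : (d - 2) % 2 = 0 := by
          have := Nat.odd_iff.mp h
          omega
        exact Dvd.dvd.mul_left (Nat.dvd_of_mod_eq_zero h2) _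
    have e1 : ((2 * ((d - 1) * (d - 2) / 2) : ℕ) : ℤ) = (((d - 1) * (d - 2) : ℕ) : ℤ) := by
      rw [Nat.mul_div_cancel' he]
    have e2 : ((2 * (d / 2) : ℕ) : ℤ) = (d : ℤ) - ((d % 2 : ℕ) : ℤ) := by
      have h : (2 * (d / 2) : ℕ) = d - d % 2 := by omega
      rw [h, Nat.cast_sub (Nat.mod_le d 2)]
    have hmain : (2 : ℤ) * (((d / 2 : ℕ) : ℤ) + (((d - 1) * (d - 2) / 2 : ℕ) : ℤ)) =
        (((d - 1) * (d - 2) : ℕ) : ℤ) + (d : ℤ) - ((d % 2 : ℕ) : ℤ) := by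
      push_cast at e1 e2
      push_cast
      linear_combination e1 + e2
    linear_combination (ArithmeticFunction.moebius (a / d) : ℤ) * hmain
  rw [F, Finset.mul_sum, Finset.sum_congr rfl key, Finset.sum_sub_distrib,
    Finset.sum_add_distrib, moebius_parity ha, sub_zero]
  exact (add_sub_cancel_right _ _).symm
end

section
/- For every integer a ≥ 3, 2·(F(a) + φ(a)) = Σ_{d ∣ a} μ(a/d)·d², where F(a) = Σ_{d ∣ a} μ(a/d)·(⌊d/2⌋ + (d−1)(d−2)/2), μ is the Möbius function, and φ is Euler's totient function. -/
open ArithmeticFunction Finset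

/-- Sum of moebius over divisors of `a > 1` vanishes. -/
lemma moebius_div_sum (a : ℕ) (h0 : a ≠ 0) (h1 : a ≠ 1) :
    ∑ d ∈ a.divisors, (ArithmeticFunction.moebius (a / d) : ℤ) = 0 := by
  rw [Nat.sum_div_divisors]
  have h := congrArg (fun f : ArithmeticFunction ℤ => f a) moebius_mul_coe_zeta
  simp only [mul_apply, one_apply, h1, if_false] at h
  rw [Nat.sum_divisorsAntidiagonal (fun x y => (moebius x : ℤ) * ((zeta : ArithmeticFunction ℤ) y))] at h
  rw [← h]
  refine Finset.sum_congr rfl fun d hd => ?_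
  have hd' : a / d ≠ 0 := by
    have hpos := Nat.pos_of_mem_divisors hd
    rw [Nat.mem_divisors] at hd
    exact (Nat.div_pos (Nat.le_of_dvd (Nat.pos_of_ne_zero h0) hd.1) hpos).ne'
  simp [natCoe_apply, ArithmeticFunction.zeta_apply, hd']

/-- Totient as moebius transform of the identity. -/
lemma totient_eq_sum (a : ℕ) (h0 : a ≠ 0) :
    (Nat.totient a : ℤ) = ∑ d ∈ a.divisors, (ArithmeticFunction.moebius (a / d) : ℤ) * d := by
  have h := (ArithmeticFunction.sum_eq_iff_sum_mul_moebius_eq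
    (f := fun n => (Nat.totient n : ℤ)) (g := fun n => (n : ℤ))).mp
    (fun n _ => by exact_mod_cast Nat.sum_totient n) a (Nat.pos_of_ne_zero h0)
  rw [← Nat.sum_divisorsAntidiagonal' (f := fun x y => (moebius x : ℤ) * (y : ℤ))]
  exact_mod_cast h.symm

/-- The parity-weighted moebius sum vanishes for `a ≥ 3`. -/
lemma parity_sum (a : ℕ) (ha : 3 ≤ a) :
    ∑ d ∈ a.divisors, (ArithmeticFunction.moebius (a / d) : ℤ) * ((d % 2 : ℕ) : ℤ) = 0 := by
  have h0 : a ≠ 0 := by omega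
  rcases Nat.even_or_odd a with he | ho
  · -- a even, a = 2 * b
    obtain ⟨b, hb⟩ : 2 ∣ a := he.two_dvd
    have hb0 : b ≠ 0 := by omega
    have hsub : b.divisors ⊆ a.divisors :=
      Nat.divisors_subset_of_dvd h0 ⟨2, by omega⟩
    rw [← Finset.sum_subset hsub ?_]
    · -- sum over divisors of b
      rcases Nat.even_or_odd b with hbe | hbo
      · -- 4 ∣ a : every term vanishes
        refine Finset.sum_eq_zero fun d hd => ?_
        rcases Nat.even_or_odd d with hde | hdo
        · have : d % 2 = 0 := Nat.even_iff.mp hde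
          simp [this]
        · have hdb : d ∣ b := (Nat.mem_divisors.mp hd).1
          have hebd : Even (b / d) := by
            obtain ⟨c, hc⟩ := hdb
            have hce : Even d ∨ Even c := Nat.even_mul.mp (hc ▸ hbe)
            have hcE : Even c := by
              rcases hce with h | h
              · exact absurd h (Nat.not_even_iff_odd.mpr hdo)
              · exact h
            rw [hc, Nat.mul_div_cancel_left c (Nat.pos_of_mem_divisors hd)]
            exact hcE
          have had : a / d = 2 * (b / d) := by
            rw [hb, Nat.mul_div_assoc 2 hdb]
          have : ¬ Squarefree (a / d) := by
            rw [had]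
            obtain ⟨m, hm⟩ := hebd
            intro hsf
            have h4 : (2 * 2 : ℕ) ∣ 2 * (b / d) := ⟨m, by omega⟩
            exact (by norm_num : ¬ IsUnit (2 : ℕ)) (hsf 2 h4)
          rw [moebius_eq_zero_of_not_squarefree this]
          simp
      · -- b odd, b ≥ 3
        have hb1 : b ≠ 1 := by
          intro h; rw [h] at hb; omega
        have key : ∀ d ∈ b.divisors,
            (moebius (a / d) : ℤ) * ((d % 2 : ℕ) : ℤ) = -(moebius (b / d) : ℤ) := by
          intro d hd
          have hdb : d ∣ b := (Nat.mem_divisors.mp hd).1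
          have hdo : Odd d := hbo.of_dvd_nat hdb
          have hbdo : Odd (b / d) := by
            obtain ⟨c, hc⟩ := hdb
            rw [hc, Nat.mul_div_cancel_left c (Nat.pos_of_mem_divisors hd)]
            rcases Nat.even_or_odd c with h | h
            · exact absurd (hc ▸ (h.mul_left d)) (Nat.not_even_iff_odd.mpr hbo)
            · exact h
          have had : a / d = 2 * (b / d) := by
            rw [hb, Nat.mul_div_assoc 2 hdb]
          have hcop : Nat.Coprime 2 (b / d) := Nat.coprime_two_left.mpr hbdo
          rw [had, ArithmeticFunction.isMultiplicative_moebius.map_mul_of_coprime hcop]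
          have hd1 : d % 2 = 1 := Nat.odd_iff.mp hdo
          simp [hd1, ArithmeticFunction.moebius_apply_prime Nat.prime_two]
        rw [Finset.sum_congr rfl key, Finset.sum_neg_distrib,
          moebius_div_sum b hb0 hb1, neg_zero]
    · -- terms over a.divisors \ b.divisors vanish: those d are even
      intro d hda hdb
      have hdvd : d ∣ a := (Nat.mem_divisors.mp hda).1
      rcases Nat.even_or_odd d with hde | hdo
      · have : d % 2 = 0 := Nat.even_iff.mp hde
        simp [this]
      · exfalso
        apply hdb
        rw [Nat.mem_divisors]
        refine ⟨?_, hb0⟩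
        have hcop : Nat.Coprime d 2 := Nat.coprime_two_right.mpr hdo
        have hdd : d ∣ 2 * b := by rw [← hb]; exact hdvd
        exact Nat.Coprime.dvd_of_dvd_mul_left hcop hdd
  · -- a odd: every divisor is odd
    have h1 : a ≠ 1 := by omega
    have key : ∀ d ∈ a.divisors, (moebius (a / d) : ℤ) * ((d % 2 : ℕ) : ℤ)
        = (moebius (a / d) : ℤ) := by
      intro d hd
      have hdo : Odd d := ho.of_dvd_nat (Nat.mem_divisors.mp hd).1
      have : d % 2 = 1 := Nat.odd_iff.mp hdo
      simp [this]
    rw [Finset.sum_congr rfl key, moebius_div_sum a h0 h1]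

/-- Pointwise identity: `2·(⌊d/2⌋ + (d−1)(d−2)/2) = d² − 2d + 2 − (d mod 2)` for `d ≥ 1`. -/
lemma pointwise (d : ℕ) (hd : 1 ≤ d) :
    (2 : ℤ) * (((d / 2 : ℕ) : ℤ) + (((d - 1) * (d - 2) / 2 : ℕ) : ℤ)) =
      (d : ℤ) ^ 2 - 2 * d + 2 - ((d % 2 : ℕ) : ℤ) := by
  rcases Nat.lt_or_ge d 2 with h | h
  · interval_cases d
    norm_num
  · have hdvd : 2 ∣ (d - 1) * (d - 2) := by
      rcases (by omega : 2 ∣ (d - 1) ∨ 2 ∣ (d - 2)) with h2 | h2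
      · exact h2.mul_right _
      · exact h2.mul_left _
    have e1 : 2 * ((d - 1) * (d - 2) / 2) = (d - 1) * (d - 2) := Nat.mul_div_cancel' hdvd
    have e2 : 2 * (d / 2) + d % 2 = d := by omega
    have c1 : (2 : ℤ) * (((d - 1) * (d - 2) / 2 : ℕ) : ℤ) = ((d : ℤ) - 1) * ((d : ℤ) - 2) := by
      have h' := congrArg (Nat.cast : ℕ → ℤ) e1
      rw [Nat.cast_mul, Nat.cast_mul, Nat.cast_sub (by omega : 1 ≤ d),
        Nat.cast_sub h] at h'
      simpa using h'
    have c2 : (2 : ℤ) * ((d / 2 : ℕ) : ℤ) + ((d % 2 : ℕ) : ℤ) = (d : ℤ) := by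
      exact_mod_cast congrArg (Nat.cast : ℕ → ℤ) e2
    nlinarith [c1, c2]

theorem two_mul_F_add_totient (a : ℕ) (ha : 3 ≤ a) :
    2 * (F a + (Nat.totient a : ℤ)) =
      ∑ d ∈ a.divisors, ArithmeticFunction.moebius (a / d) * (d : ℤ) ^ 2 := by
  have h0 : a ≠ 0 := by omega
  have h1 : a ≠ 1 := by omega
  have hF : 2 * F a = ∑ d ∈ a.divisors,
      (moebius (a / d) : ℤ) * ((d : ℤ) ^ 2 - 2 * d + 2 - ((d % 2 : ℕ) : ℤ)) := by
    rw [F, Finset.mul_sum]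
    refine Finset.sum_congr rfl fun d hd => ?_
    rw [← pointwise d (Nat.pos_of_mem_divisors hd)]
    ring
  have expand : ∑ d ∈ a.divisors,
      (moebius (a / d) : ℤ) * ((d : ℤ) ^ 2 - 2 * d + 2 - ((d % 2 : ℕ) : ℤ)) =
      (∑ d ∈ a.divisors, (moebius (a / d) : ℤ) * (d : ℤ) ^ 2)
      - 2 * (∑ d ∈ a.divisors, (moebius (a / d) : ℤ) * d)
      + 2 * (∑ d ∈ a.divisors, (moebius (a / d) : ℤ))
      - (∑ d ∈ a.divisors, (moebius (a / d) : ℤ) * ((d % 2 : ℕ) : ℤ)) := by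
    rw [Finset.mul_sum, Finset.mul_sum, ← Finset.sum_sub_distrib, ← Finset.sum_add_distrib,
      ← Finset.sum_sub_distrib]
    exact Finset.sum_congr rfl fun d hd => by ring
  rw [mul_add, hF, expand, moebius_div_sum a h0 h1, parity_sum a ha, ← totient_eq_sum a h0]
  ring
end

section
/- For every integer a ≥ 3, F(a) + φ(a) = (a²/2) · ∏_{p ∣ a, p prime} (1 − 1/p²), as an identity of rational numbers, where F(a) = Σ_{d ∣ a} μ(a/d)·(⌊d/2⌋ + (d−1)(d−2)/2). -/
open ArithmeticFunction Finset
open scoped ArithmeticFunction.Moebius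

/-- The sum of the Möbius function over the divisors of `n > 1` vanishes. -/
theorem Faux.sum_moebius_divisors_eq_zero {n : ℕ} (hn : 1 < n) :
    ∑ d ∈ n.divisors, (μ d : ℤ) = 0 := by
  have h := congrArg (fun f : ArithmeticFunction ℤ => f n) moebius_mul_coe_zeta
  simp only [mul_apply, one_apply] at h
  rw [if_neg (by omega)] at h
  rw [← h, ← Nat.sum_divisorsAntidiagonal (f := fun x y => (μ x : ℤ))]
  refine Finset.sum_congr rfl fun x hx => ?_
  rw [Nat.mem_divisorsAntidiagonal] at hx
  have h2 : x.2 ≠ 0 := by rintro h0; rw [← hx.1, h0, mul_zero] at hx; exact hx.2 rfl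
  simp [natCoe_apply, zeta_apply, h2]

/-- `Σ_{d ∣ a, 2 ∣ d} μ(a/d) = 0` for `a ≥ 3`. -/
theorem Faux.sum_even (a : ℕ) (ha : 3 ≤ a) :
    ∑ d ∈ a.divisors, (μ (a / d) : ℚ) * (if 2 ∣ d then 1 else 0) = 0 := by
  have hstep : ∑ d ∈ a.divisors, (μ (a / d) : ℚ) * (if 2 ∣ d then 1 else 0)
      = ∑ d ∈ a.divisors.filter (2 ∣ ·), (μ (a / d) : ℚ) := by
    rw [Finset.sum_filter]
    exact Finset.sum_congr rfl fun d hd => by split <;> simp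
  rw [hstep]
  by_cases hev : 2 ∣ a
  · obtain ⟨m, rfl⟩ := hev
    have hm : 2 ≤ m := by omega
    have hbij : ∑ d ∈ (2 * m).divisors.filter (2 ∣ ·), (μ (2 * m / d) : ℚ)
        = ∑ c ∈ m.divisors, (μ (m / c) : ℚ) := by
      refine Finset.sum_nbij' (fun d => d / 2) (fun c => 2 * c) ?_ ?_ ?_ ?_ ?_
      · intro d hd
        simp only [Finset.mem_filter, Nat.mem_divisors] at hd
        obtain ⟨⟨hdvd, _⟩, ⟨e, rfl⟩⟩ := hd
        simp only [Nat.mem_divisors]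
        refine ⟨?_, by omega⟩
        have h1 : 2 * e / 2 = e := by omega
        rw [h1]
        exact (mul_dvd_mul_iff_left (two_ne_zero)).mp hdvd
      · intro c hc
        simp only [Nat.mem_divisors] at hc
        simp only [Finset.mem_filter, Nat.mem_divisors]
        exact ⟨⟨mul_dvd_mul_left 2 hc.1, by omega⟩, ⟨c, rfl⟩⟩
      · intro d hd
        simp only [Finset.mem_filter] at hd
        obtain ⟨_, e, rfl⟩ := hd
        omega
      · intro c hc; omega
      · intro d hd
        simp only [Finset.mem_filter] at hd
        obtain ⟨_, e, rfl⟩ := hd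
        congr 1
        have h1 : 2 * e / 2 = e := by omega
        rw [h1, Nat.mul_div_mul_left _ _ (by omega)]
    rw [hbij, Nat.sum_div_divisors m (fun c => (μ c : ℚ))]
    have h0 := Faux.sum_moebius_divisors_eq_zero (n := m) (by omega)
    exact_mod_cast congrArg (fun z : ℤ => (z : ℚ)) h0
  · rw [Finset.filter_false_of_mem, Finset.sum_empty]
    intro d hd h2d
    exact hev (h2d.trans (Nat.mem_divisors.mp hd).1)

/-- Twice the summand of `F`: `2(⌊d/2⌋ + (d−1)(d−2)/2) = d² − 2d + 1 + [2 ∣ d]`. -/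
theorem Faux.two_mul_term (d : ℕ) (hd : 1 ≤ d) :
    (2 : ℚ) * (((d / 2 : ℕ) : ℚ) + (((d - 1) * (d - 2) / 2 : ℕ) : ℚ)) =
      (d : ℚ) ^ 2 - 2 * d + 1 + (if 2 ∣ d then 1 else 0) := by
  obtain ⟨m, rfl | rfl⟩ := Nat.even_or_odd' d
  · obtain ⟨k, rfl⟩ : ∃ k, m = k + 1 := ⟨m - 1, by omega⟩
    rw [if_pos ⟨k + 1, rfl⟩]
    have h1 : 2 * (k + 1) / 2 = k + 1 := by omega
    have h2 : (2 * (k + 1) - 1) * (2 * (k + 1) - 2) / 2 = (2 * k + 1) * k := by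
      have e1 : 2 * (k + 1) - 1 = 2 * k + 1 := by omega
      have e2 : 2 * (k + 1) - 2 = 2 * k := by omega
      rw [e1, e2, show (2 * k + 1) * (2 * k) = 2 * ((2 * k + 1) * k) by ring,
        Nat.mul_div_cancel_left _ (by omega)]
    rw [h1, h2]
    push_cast
    ring
  · rcases Nat.eq_zero_or_pos m with rfl | hm
    · norm_num
    rw [if_neg (by omega)]
    have h1 : (2 * m + 1) / 2 = m := by omega
    have h2 : (2 * m + 1 - 1) * (2 * m + 1 - 2) / 2 = m * (2 * (m - 1) + 1) := by
      have e1 : 2 * m + 1 - 1 = 2 * m := by omega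
      have e2 : 2 * m + 1 - 2 = 2 * (m - 1) + 1 := by omega
      rw [e1, e2, show 2 * m * (2 * (m - 1) + 1) = 2 * (m * (2 * (m - 1) + 1)) by ring,
        Nat.mul_div_cancel_left _ (by omega)]
    rw [h1, h2]
    obtain ⟨j, rfl⟩ : ∃ j, m = j + 1 := ⟨m - 1, by omega⟩
    have e3 : j + 1 - 1 = j := by omega
    rw [e3]
    push_cast
    ring

/-- `Σ_{d ∣ a} μ(a/d) d² = a² ∏_{p ∣ a} (1 − 1/p²)` (Jordan totient `J₂`). -/
theorem Faux.sum_moebius_sq (a : ℕ) (ha : a ≠ 0) :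
    ∑ d ∈ a.divisors, (μ (a / d) : ℚ) * (d : ℚ) ^ 2 =
      (a : ℚ) ^ 2 * ∏ p ∈ a.primeFactors, (1 - 1 / (p : ℚ) ^ 2) := by
  set f : ArithmeticFunction ℚ :=
    ((μ : ArithmeticFunction ℤ) : ArithmeticFunction ℚ) *
      ((ArithmeticFunction.pow 2 : ArithmeticFunction ℕ) : ArithmeticFunction ℚ) with hfdef
  have hmult : f.IsMultiplicative :=
    isMultiplicative_moebius.intCast.mul isMultiplicative_pow.natCast
  have happ : ∀ n : ℕ, f n = ∑ d ∈ n.divisors, (μ (n / d) : ℚ) * (d : ℚ) ^ 2 := by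
    intro n
    rw [hfdef, mul_apply,
      Nat.sum_divisorsAntidiagonal' (f := fun x y =>
        (((μ : ArithmeticFunction ℤ) : ArithmeticFunction ℚ) x) *
        (((ArithmeticFunction.pow 2 : ArithmeticFunction ℕ) : ArithmeticFunction ℚ) y))]
    refine Finset.sum_congr rfl fun d hd => ?_
    simp [intCoe_apply, natCoe_apply, pow_apply]
  have hpp : ∀ p k : ℕ, p.Prime → k ≠ 0 →
      f (p ^ k) = ((p : ℚ) ^ k) ^ 2 * (1 - 1 / (p : ℚ) ^ 2) := by
    intro p k hp hk
    have hp0 : (p : ℚ) ≠ 0 := Nat.cast_ne_zero.mpr hp.pos.ne'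
    obtain ⟨j, rfl⟩ : ∃ j, k = j + 1 := ⟨k - 1, by omega⟩
    rw [happ, Nat.sum_divisors_prime_pow hp]
    rw [Finset.sum_range_succ, Finset.sum_range_succ]
    have hz : ∀ i ∈ Finset.range j,
        (μ (p ^ (j + 1) / p ^ i) : ℚ) * ((p ^ i : ℕ) : ℚ) ^ 2 = 0 := by
      intro i hi
      rw [Finset.mem_range] at hi
      rw [Nat.pow_div (by omega) hp.pos, moebius_apply_prime_pow hp (by omega),
        if_neg (by omega)]
      simp
    rw [Finset.sum_eq_zero hz]
    have h1 : p ^ (j + 1) / p ^ j = p := by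
      rw [Nat.pow_div (by omega) hp.pos]; simp
    have h2 : p ^ (j + 1) / p ^ (j + 1) = 1 := Nat.div_self (pow_pos hp.pos _)
    rw [h1, h2, moebius_apply_prime hp, moebius_apply_one]
    push_cast
    field_simp
    ring
  calc ∑ d ∈ a.divisors, (μ (a / d) : ℚ) * (d : ℚ) ^ 2 = f a := (happ a).symm
    _ = a.factorization.prod fun p k => f (p ^ k) :=
        hmult.multiplicative_factorization f ha
    _ = ∏ p ∈ a.primeFactors, ((p : ℚ) ^ (a.factorization p)) ^ 2 * (1 - 1 / (p : ℚ) ^ 2) := by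
        rw [Nat.prod_factorization_eq_prod_primeFactors]
        exact Finset.prod_congr rfl fun p hp => hpp p _ (Nat.prime_of_mem_primeFactors hp)
          (by rw [← Nat.support_factorization] at hp; exact Finsupp.mem_support_iff.mp hp)
    _ = (a : ℚ) ^ 2 * ∏ p ∈ a.primeFactors, (1 - 1 / (p : ℚ) ^ 2) := by
        rw [Finset.prod_mul_distrib, Finset.prod_pow]
        congr 1
        have h3 : ((a : ℕ) : ℚ) = ∏ p ∈ a.primeFactors, (p : ℚ) ^ (a.factorization p) := by
          conv_lhs => rw [← Nat.factorization_prod_pow_eq_self ha]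
          rw [Nat.prod_factorization_eq_prod_primeFactors]
          push_cast
          rfl
        rw [h3]

/-- `Σ_{d ∣ n} μ(n/d) d = φ(n)` (Möbius inversion of `Σ_{d ∣ n} φ(d) = n`). -/
theorem Faux.totient_eq_sum_moebius (n : ℕ) (hn : 0 < n) :
    (Nat.totient n : ℤ) = ∑ d ∈ n.divisors, (μ (n / d) : ℤ) * d := by
  have h := (ArithmeticFunction.sum_eq_iff_sum_mul_moebius_eq (R := ℤ)
    (f := fun x => (Nat.totient x : ℤ)) (g := fun x => (x : ℤ))).mp ?_ n hn
  · simp only [Int.cast_id] at h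
    rw [← h, Nat.sum_divisorsAntidiagonal' (f := fun x y => (μ x : ℤ) * y)]
  · intro m hm
    exact_mod_cast congrArg (Nat.cast : ℕ → ℤ) (Nat.sum_totient m)

theorem F_add_totient_eq (a : ℕ) (ha : 3 ≤ a) :
    (F a : ℚ) + (Nat.totient a : ℚ) =
      (a : ℚ) ^ 2 / 2 * ∏ p ∈ a.primeFactors, (1 - 1 / (p : ℚ) ^ 2) := by
  have ha0 : a ≠ 0 := by omega
  set P : ℚ := ∏ p ∈ a.primeFactors, (1 - 1 / (p : ℚ) ^ 2) with hP
  -- the four sums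
  have hS2 : ∑ d ∈ a.divisors, (μ (a / d) : ℚ) * d = (Nat.totient a : ℚ) := by
    have h := Faux.totient_eq_sum_moebius a (by omega)
    have : ((Nat.totient a : ℤ) : ℚ) = ((∑ d ∈ a.divisors, (μ (a / d) : ℤ) * d : ℤ) : ℚ) := by
      exact_mod_cast congrArg (fun z : ℤ => (z : ℚ)) h
    push_cast at this
    linarith [this]
  have hS3 : ∑ d ∈ a.divisors, (μ (a / d) : ℚ) = 0 := by
    rw [Nat.sum_div_divisors a (fun d => (μ d : ℚ))]
    have h0 := Faux.sum_moebius_divisors_eq_zero (n := a) (by omega)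
    exact_mod_cast congrArg (fun z : ℤ => (z : ℚ)) h0
  have h2F : (2 : ℚ) * (F a : ℚ) =
      (∑ d ∈ a.divisors, (μ (a / d) : ℚ) * (d : ℚ) ^ 2)
        - 2 * (∑ d ∈ a.divisors, (μ (a / d) : ℚ) * d)
        + (∑ d ∈ a.divisors, (μ (a / d) : ℚ))
        + (∑ d ∈ a.divisors, (μ (a / d) : ℚ) * (if 2 ∣ d then 1 else 0)) := by
    have step1 : (2 : ℚ) * (F a : ℚ) = ∑ d ∈ a.divisors,
        (μ (a / d) : ℚ) * ((d : ℚ) ^ 2 - 2 * d + 1 + (if 2 ∣ d then 1 else 0)) := by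
      rw [F, Int.cast_sum, Finset.mul_sum]
      refine Finset.sum_congr rfl fun d hd => ?_
      rw [Int.cast_mul, Int.cast_add, Int.cast_natCast, Int.cast_natCast,
        ← Faux.two_mul_term d (Nat.pos_of_mem_divisors hd)]
      ring
    rw [step1]
    rw [show (fun d => (μ (a / d) : ℚ) * ((d : ℚ) ^ 2 - 2 * d + 1 + (if 2 ∣ d then 1 else 0)))
        = fun d => ((μ (a / d) : ℚ) * (d : ℚ) ^ 2 - 2 * ((μ (a / d) : ℚ) * d)
          + (μ (a / d) : ℚ) + (μ (a / d) : ℚ) * (if 2 ∣ d then 1 else 0))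
      from funext fun d => by ring]
    rw [Finset.sum_add_distrib, Finset.sum_add_distrib, Finset.sum_sub_distrib,
      ← Finset.mul_sum]
  rw [Faux.sum_moebius_sq a ha0, hS2, hS3, Faux.sum_even a ha] at h2F
  have hgoal : (a : ℚ) ^ 2 / 2 * P = ((a : ℚ) ^ 2 * P) / 2 := by ring
  rw [hgoal]
  linarith [h2F]
end

section
/- For every integer a ≥ 3, define V on (ℤ/aℤ)³ by V(x,y,z) = (x+y, z−x, x). Then the equivalence relation on E_1(a) generated by the relations α ∼ S(α), α ∼ T(α), and α ∼ V(α) for those α ∈ E_1(a) with V(α) ∈ E_1(a), has exactly one equivalence class; that is, the group generated by S, T and the adjacency move acts transitively on E_1(a). -/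
/-- The adjacency move `V(x,y,z) = (x+y, z−x, x)`. -/
def Vm {n : ℕ} (v : ZMod n × ZMod n × ZMod n) : ZMod n × ZMod n × ZMod n :=
  (v.1 + v.2.1, v.2.2 - v.1, v.1)

/-- Generating relation on `E_1(a)`: `α ∼ S(α)`, `α ∼ T(α)`, and `α ∼ V(α)` whenever
`V(α)` still lies in `E_1(a)` (automatic here since `β` is an element of `E_1(a)`). -/
def triRelV (a : ℕ) (α β : Ek a 1) : Prop :=
  (β : ZMod a × ZMod a × ZMod a) = Sm (α : ZMod a × ZMod a × ZMod a) ∨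
  (β : ZMod a × ZMod a × ZMod a) = Tm (α : ZMod a × ZMod a × ZMod a) ∨
  (β : ZMod a × ZMod a × ZMod a) = Vm (α : ZMod a × ZMod a × ZMod a)

section Aux

variable {a : ℕ}

/-- The gcd condition in `Ek a 1` is equivalent to a Bézout-type condition in `ZMod a`. -/
lemma gcd_combo [NeZero a] (x y z : ZMod a) :
    Nat.gcd (Nat.gcd (Nat.gcd x.val y.val) z.val) a = 1 ↔
      ∃ p q r : ZMod a, p*x + q*y + r*z = 1 := by
  constructor
  · intro h
    set g2 := Nat.gcd x.val y.val with hg2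
    set g3 := Nat.gcd g2 z.val with hg3
    have hb1 : ((g2 : ℕ) : ℤ) = x.val * Nat.gcdA x.val y.val + y.val * Nat.gcdB x.val y.val :=
      Nat.gcd_eq_gcd_ab _ _
    have hb2 : ((g3 : ℕ) : ℤ) = g2 * Nat.gcdA g2 z.val + z.val * Nat.gcdB g2 z.val :=
      Nat.gcd_eq_gcd_ab _ _
    have hu : IsUnit ((g3 : ℕ) : ZMod a) := (ZMod.isUnit_iff_coprime g3 a).2 h
    obtain ⟨u, hu⟩ := hu
    have key : ((g3 : ℕ) : ZMod a) =
        x * ((Nat.gcdA x.val y.val * Nat.gcdA g2 z.val : ℤ) : ZMod a)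
        + y * ((Nat.gcdB x.val y.val * Nat.gcdA g2 z.val : ℤ) : ZMod a)
        + z * ((Nat.gcdB g2 z.val : ℤ) : ZMod a) := by
      have := congrArg (fun t : ℤ => (t : ZMod a)) hb2
      have h2 := congrArg (fun t : ℤ => (t : ZMod a)) hb1
      simp only [ZMod.natCast_zmod_val, Int.cast_add, Int.cast_mul, Int.cast_natCast] at this h2
      rw [this, h2]; push_cast; ring
    refine ⟨((Nat.gcdA x.val y.val * Nat.gcdA g2 z.val : ℤ) : ZMod a) * ↑u⁻¹,
            ((Nat.gcdB x.val y.val * Nat.gcdA g2 z.val : ℤ) : ZMod a) * ↑u⁻¹,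
            ((Nat.gcdB g2 z.val : ℤ) : ZMod a) * ↑u⁻¹, ?_⟩
    have h1 : ((g3 : ℕ) : ZMod a) * ↑u⁻¹ = 1 := by
      rw [← hu]; exact u.mul_inv
    calc _ = (((g3 : ℕ) : ZMod a)) * ↑u⁻¹ := by rw [key]; ring
    _ = 1 := h1
  · rintro ⟨p, q, r, h⟩
    set g := Nat.gcd (Nat.gcd (Nat.gcd x.val y.val) z.val) a with hg
    have hga : g ∣ a := Nat.gcd_dvd_right _ _
    have hgx : g ∣ x.val :=
      dvd_trans (Nat.gcd_dvd_left _ _) (dvd_trans (Nat.gcd_dvd_left _ _) (Nat.gcd_dvd_left _ _))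
    have hgy : g ∣ y.val :=
      dvd_trans (Nat.gcd_dvd_left _ _) (dvd_trans (Nat.gcd_dvd_left _ _) (Nat.gcd_dvd_right _ _))
    have hgz : g ∣ z.val := dvd_trans (Nat.gcd_dvd_left _ _) (Nat.gcd_dvd_right _ _)
    have hcast : ((p.val * x.val + q.val * y.val + r.val * z.val : ℕ) : ZMod a)
        = ((1 : ℕ) : ZMod a) := by
      push_cast [ZMod.natCast_zmod_val]
      exact h
    have hm : (p.val * x.val + q.val * y.val + r.val * z.val) ≡ 1 [MOD a] :=
      (ZMod.natCast_eq_natCast_iff _ _ _).1 hcast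
    have hm2 : (p.val * x.val + q.val * y.val + r.val * z.val) ≡ 1 [MOD g] :=
      hm.of_dvd hga
    have hdvd : g ∣ (p.val * x.val + q.val * y.val + r.val * z.val) :=
      dvd_add (dvd_add (hgx.mul_left _) (hgy.mul_left _)) (hgz.mul_left _)
    have h01 : (0 : ℕ) ≡ 1 [MOD g] :=
      ((Nat.modEq_zero_iff_dvd).2 hdvd).symm.trans hm2
    exact Nat.dvd_one.1 ((Nat.modEq_zero_iff_dvd).1 h01.symm)

/-- the working predicate on pairs `(x, y)`, representing the triple `(x, y, -x-y)`. -/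
def Wp {a : ℕ} (x y : ZMod a) : Prop :=
  x ≠ 0 ∧ y ≠ 0 ∧ x + y ≠ 0 ∧ ∃ p q : ZMod a, p * x + q * y = 1

lemma memW [NeZero a] {x y : ZMod a} (h : Wp x y) :
    ((x, y, -x-y) : ZMod a × ZMod a × ZMod a) ∈ Ek a 1 := by
  obtain ⟨hx, hy, hxy, p, q, hpq⟩ := h
  refine ⟨hx, hy, ?_, by ring, ?_⟩
  · exact fun hh => hxy (by linear_combination -hh)
  · exact (gcd_combo x y (-x-y)).2 ⟨p, q, 0, by linear_combination hpq⟩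

/-- class of the triple `(x, y, -x-y)` in the quotient. -/
def pcl [NeZero a] (x y : ZMod a) (h : Wp x y) : Quot (triRelV a) :=
  Quot.mk _ ⟨(x, y, -x-y), memW h⟩

lemma pcl_congr [NeZero a] {x y x' y' : ZMod a} (hx : x = x') (hy : y = y')
    (h1 : Wp x y) (h2 : Wp x' y') : pcl x y h1 = pcl x' y' h2 := by
  subst hx; subst hy; rfl

lemma WpS {x y : ZMod a} (h : Wp x y) : Wp (-x) (-y) := by
  obtain ⟨hx, hy, hxy, p, q, hpq⟩ := h
  exact ⟨neg_ne_zero.2 hx, neg_ne_zero.2 hy,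
    fun hh => hxy (by linear_combination -hh), -p, -q, by linear_combination hpq⟩

lemma WpT {x y : ZMod a} (h : Wp x y) : Wp y (-x-y) := by
  obtain ⟨hx, hy, hxy, p, q, hpq⟩ := h
  refine ⟨hy, fun hh => hxy (by linear_combination -hh), ?_,
    q - p, -p, by linear_combination hpq⟩
  have : y + (-x - y) = -x := by ring
  rw [this]
  exact neg_ne_zero.2 hx

lemma pS [NeZero a] {x y : ZMod a} (h1 : Wp x y) (h2 : Wp (-x) (-y)) :
    pcl x y h1 = pcl (-x) (-y) h2 := by
  apply Quot.sound
  left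
  show ((-x, -y, -(-x) - -y) : ZMod a × ZMod a × ZMod a) = Sm (x, y, -x-y)
  simp only [Sm, Prod.mk.injEq]
  exact ⟨trivial, trivial, by ring⟩

lemma pT [NeZero a] {x y : ZMod a} (h1 : Wp x y) (h2 : Wp y (-x-y)) :
    pcl x y h1 = pcl y (-x-y) h2 := by
  apply Quot.sound
  right; left
  show ((y, -x-y, -y - (-x-y)) : ZMod a × ZMod a × ZMod a) = Tm (x, y, -x-y)
  simp only [Tm, Prod.mk.injEq]
  exact ⟨trivial, trivial, by ring⟩

/-- the key derived move (a composite of `S`, `T` and the adjacency move `V`):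
subtract `x` from `y`. -/
lemma pL [NeZero a] {x y : ZMod a} (h1 : Wp x y) (h2 : Wp x (y - x)) :
    pcl x y h1 = pcl x (y - x) h2 := by
  have s1 := pS h1 (WpS h1)
  have s2 := pT (WpS h1) (WpT (WpS h1))
  refine (s1.trans s2).trans ?_
  apply Quot.sound
  right; right
  show ((x, y - x, -x - (y - x)) : ZMod a × ZMod a × ZMod a)
      = Vm (-y, -(-x) - -y, -(-y) - (-(-x) - -y))
  simp only [Vm, Prod.mk.injEq]
  exact ⟨by ring, by ring, by ring⟩

lemma Wp_of_unit [NeZero a] [Nontrivial (ZMod a)] {x y : ZMod a} (hx : IsUnit x)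
    (hy : y ≠ 0) (hxy : x + y ≠ 0) : Wp x y :=
  ⟨hx.ne_zero, hy, hxy, ↑hx.unit⁻¹, 0, by rw [hx.val_inv_mul, zero_mul, add_zero]⟩

lemma natCast_ne_zero_of [NeZero a] {m : ℕ} (h0 : 0 < m) (hlt : m < a) :
    ((m : ZMod a)) ≠ 0 := by
  rw [Ne, ZMod.natCast_eq_zero_iff]
  exact fun hd => absurd (Nat.le_of_dvd h0 hd) (by omega)

/-- walking along multiples of a unit `x`. -/
lemma walk_unit [NeZero a] (ha3 : 3 ≤ a) {x : ZMod a} (hx : IsUnit x) :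
    ∀ m : ℕ, 1 ≤ m → m ≤ a - 2 → ∀ (h1 : Wp x ((m : ZMod a) * x)) (h2 : Wp x x),
      pcl x ((m : ZMod a) * x) h1 = pcl x x h2 := by
  intro m
  induction m with
  | zero => intro h; exact absurd h (by omega)
  | succ n ih =>
    intro _ hle h1 h2
    rcases Nat.eq_zero_or_pos n with hn | hn
    · subst hn
      exact pcl_congr rfl (by push_cast; ring) h1 h2
    · have hWn : Wp x ((n : ZMod a) * x) := by
        refine ⟨h1.1, ?_, ?_, ?_⟩
        · rw [Ne, hx.mul_left_eq_zero]
          exact natCast_ne_zero_of hn (by omega)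
        · have e : x + (n : ZMod a) * x = ((n+1 : ℕ) : ZMod a) * x := by push_cast; ring
          rw [e, Ne, hx.mul_left_eq_zero]
          exact natCast_ne_zero_of (by omega) (by omega)
        · exact ⟨↑hx.unit⁻¹, 0, by rw [hx.val_inv_mul, zero_mul, add_zero]⟩
      have e : ((n+1 : ℕ) : ZMod a) * x - x = (n : ZMod a) * x := by push_cast; ring
      have hWn' : Wp x (((n+1 : ℕ) : ZMod a) * x - x) := by rw [e]; exact hWn
      have step := (pL h1 hWn').trans (pcl_congr rfl e hWn' hWn)
      exact step.trans (ih (by omega) (by omega) hWn h2)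

/-- if `x` is a unit then `(x, y)` is connected to `(x, x)`. -/
lemma to_diag [NeZero a] (ha3 : 3 ≤ a) {x y : ZMod a} (hx : IsUnit x)
    (h1 : Wp x y) (h2 : Wp x x) : pcl x y h1 = pcl x x h2 := by
  set c : ZMod a := y * ↑hx.unit⁻¹ with hc
  have hcx : c * x = y := by
    rw [hc]
    calc y * ↑hx.unit⁻¹ * x = (↑hx.unit⁻¹ * x) * y := by ring
    _ = y := by rw [hx.val_inv_mul, one_mul]
  have hcy : ((c.val : ℕ) : ZMod a) * x = y := by rw [ZMod.natCast_zmod_val]; exact hcx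
  have hc0 : c ≠ 0 := fun h0 => h1.2.1 (by rw [← hcx, h0, zero_mul])
  have hk0 : 1 ≤ c.val := by
    rcases Nat.eq_zero_or_pos c.val with h0 | h0
    · exact absurd ((ZMod.val_eq_zero c).1 h0) hc0
    · exact h0
  have hkne : c.val ≠ a - 1 := by
    intro hk
    apply h1.2.2.1
    have hcm : c = ((a - 1 : ℕ) : ZMod a) := by rw [← hk, ZMod.natCast_zmod_val]
    have e1 : ((a - 1 : ℕ) : ZMod a) = -1 := by
      have : ((a - 1 : ℕ) : ZMod a) = (a : ZMod a) - 1 := by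
        push_cast [Nat.cast_sub (by omega : 1 ≤ a)]; ring
      rw [this, ZMod.natCast_self, zero_sub]
    have hy : y = -x := by rw [← hcx, hcm, e1]; ring
    rw [hy]; ring
  have hklt : c.val < a := ZMod.val_lt c
  have h1' : Wp x ((c.val : ZMod a) * x) := by rw [hcy]; exact h1
  exact (pcl_congr rfl hcy.symm h1 h1').trans
    (walk_unit ha3 hx c.val hk0 (by omega) h1' h2)

/-- walking along multiples of `x` in the non-unit case, watched through `ZMod d`. -/
lemma walk2 [NeZero a] {d : ℕ} (hdvd : d ∣ a)
    {x y : ZMod a} (hx : x ≠ 0)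
    (hφx : ZMod.castHom hdvd (ZMod d) x = 0)
    (hφy : ZMod.castHom hdvd (ZMod d) y ≠ 0)
    (hcmb : ∃ p q : ZMod a, p * x + q * y = 1) :
    ∀ (k : ℕ) (h1 : Wp x y) (h2 : Wp x (y + (k : ZMod a) * x)),
      pcl x y h1 = pcl x (y + (k : ZMod a) * x) h2 := by
  set φ := ZMod.castHom hdvd (ZMod d) with hφ
  intro k
  induction k with
  | zero => intro h1 h2; exact pcl_congr rfl (by push_cast; ring) h1 h2
  | succ n ih =>
    intro h1 h2
    have hφn : φ (y + (n : ZMod a) * x) = φ y := by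
      rw [map_add, map_mul, hφx, mul_zero, add_zero]
    have hWn : Wp x (y + (n : ZMod a) * x) := by
      refine ⟨hx, ?_, ?_, ?_⟩
      · intro h0; exact hφy (by rw [← hφn, h0, map_zero])
      · intro h0
        apply hφy
        have : φ (x + (y + (n : ZMod a) * x)) = φ y := by
          rw [map_add, hφx, zero_add]; exact hφn
        rw [← this, h0, map_zero]
      · obtain ⟨p, q, hpq⟩ := hcmb
        exact ⟨p - q * (n : ZMod a), q, by linear_combination hpq⟩
    have e : (y + ((n+1 : ℕ) : ZMod a) * x) - x = y + (n : ZMod a) * x := by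
      push_cast; ring
    have hWn' : Wp x ((y + ((n+1 : ℕ) : ZMod a) * x) - x) := by rw [e]; exact hWn
    exact ((ih h1 hWn).trans (pcl_congr rfl e hWn' hWn).symm).trans (pL h2 hWn').symm

lemma two_ne_zeroZ [NeZero a] (ha3 : 3 ≤ a) : ((1 : ZMod a) + 1) ≠ 0 := by
  have : ((1 : ZMod a) + 1) = ((2 : ℕ) : ZMod a) := by push_cast; ring
  rw [this]
  exact natCast_ne_zero_of (by omega) (by omega)

lemma Wp_one_one [NeZero a] (ha3 : 3 ≤ a) : Wp (1 : ZMod a) 1 := by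
  haveI : Fact (1 < a) := ⟨by omega⟩
  exact ⟨one_ne_zero, one_ne_zero, two_ne_zeroZ ha3, 1, 0, by ring⟩

lemma fin1 [NeZero a] (ha3 : 3 ≤ a) {u : ZMod a} (hu : IsUnit u) (h : Wp u u) :
    pcl u u h = pcl 1 1 (Wp_one_one ha3) := by
  haveI : Fact (1 < a) := ⟨by omega⟩
  by_cases hu1 : u = -1
  · subst hu1
    refine (pS h (WpS h)).trans ?_
    exact pcl_congr (by ring) (by ring) (WpS h) (Wp_one_one ha3)
  · have hone : u + 1 ≠ 0 := fun h0 => hu1 (by linear_combination h0)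
    have w1 : Wp u 1 := Wp_of_unit hu one_ne_zero hone
    have w2 : Wp 1 (-u-1) := WpT w1
    have w3 : Wp (1 : ZMod a) 1 := Wp_one_one ha3
    calc pcl u u h = pcl u 1 w1 := (to_diag ha3 hu w1 h).symm
    _ = pcl 1 (-u-1) w2 := pT w1 w2
    _ = pcl 1 1 w3 := to_diag ha3 isUnit_one w2 w3

lemma Wp_diag_of_unit [NeZero a] (ha3 : 3 ≤ a) {u : ZMod a} (hu : IsUnit u) :
    Wp u u := by
  haveI : Fact (1 < a) := ⟨by omega⟩
  refine Wp_of_unit hu hu.ne_zero ?_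
  intro h0
  have : ((1 : ZMod a) + 1) * u = 0 := by linear_combination h0
  rw [hu.mul_left_eq_zero] at this
  exact two_ne_zeroZ ha3 this

/-- every vertex is connected to `(1, 1, -2)`. -/
lemma key_red [NeZero a] (ha3 : 3 ≤ a) (x y : ZMod a) (h : Wp x y) :
    pcl x y h = pcl 1 1 (Wp_one_one ha3) := by
  haveI : Fact (1 < a) := ⟨by omega⟩
  by_cases hu : IsUnit x
  · exact (to_diag ha3 hu h (Wp_diag_of_unit ha3 hu)).trans
      (fin1 ha3 hu (Wp_diag_of_unit ha3 hu))
  · set d := Nat.gcd x.val a with hd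
    have hdvd : d ∣ a := Nat.gcd_dvd_right _ _
    have hd1 : d ≠ 1 := by
      intro h1
      exact hu (by
        rw [← ZMod.natCast_zmod_val x]
        exact (ZMod.isUnit_iff_coprime x.val a).2 h1)
    have hd0 : d ≠ 0 := fun h0 => NeZero.ne a (Nat.eq_zero_of_gcd_eq_zero_right h0)
    haveI : Fact (1 < d) := ⟨by omega⟩
    haveI : NeZero d := ⟨hd0⟩
    set φ := ZMod.castHom hdvd (ZMod d) with hφdef
    have hφx : φ x = 0 := by
      rw [hφdef, ← ZMod.natCast_zmod_val x, map_natCast,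
        ZMod.natCast_eq_zero_iff]
      exact Nat.gcd_dvd_left _ _
    obtain ⟨p, q, hpq⟩ := h.2.2.2
    have hφqy : φ q * φ y = 1 := by
      have := congrArg φ hpq
      rw [map_add, map_mul, map_mul, hφx, mul_zero, zero_add, map_one] at this
      exact this
    have hφy : φ y ≠ 0 := fun h0 => by
      rw [h0, mul_zero] at hφqy; exact zero_ne_one hφqy
    have hUy : IsUnit (φ y) := IsUnit.of_mul_eq_one _ (by rw [mul_comm] at hφqy; exact hφqy)
    obtain ⟨U, hU⟩ := ZMod.unitsMap_surjective hdvd hUy.unit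
    set u : ZMod a := ↑U with hudef
    have hu' : IsUnit u := U.isUnit
    have hφu : φ u = φ y := by
      have := congrArg (Units.val) hU
      rw [ZMod.unitsMap_def] at this
      simpa [hudef, hUy.unit_spec, hφdef, ZMod.castHom_apply] using this
    have hdval : d ∣ (u - y).val := by
      have : φ (u - y) = 0 := by rw [map_sub, hφu, sub_self]
      rw [hφdef, ← ZMod.natCast_zmod_val (u - y), map_natCast,
        ZMod.natCast_eq_zero_iff] at this
      exact this
    obtain ⟨t, ht⟩ := hdval
    have hbez : ((d : ℕ) : ℤ) = x.val * Nat.gcdA x.val a + a * Nat.gcdB x.val a :=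
      Nat.gcd_eq_gcd_ab _ _
    have hdx : ((d : ℕ) : ZMod a) = x * ((Nat.gcdA x.val a : ℤ) : ZMod a) := by
      have := congrArg (fun t : ℤ => (t : ZMod a)) hbez
      push_cast at this
      rw [ZMod.natCast_zmod_val, ZMod.natCast_self] at this
      simpa using this
    set m : ZMod a := ((Nat.gcdA x.val a : ℤ) : ZMod a) * (t : ZMod a) with hm
    have hum : u = y + ((m.val : ℕ) : ZMod a) * x := by
      rw [ZMod.natCast_zmod_val]
      have h1 : u - y = ((d * t : ℕ) : ZMod a) := by
        rw [← ht, ZMod.natCast_zmod_val]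
      have : u - y = m * x := by
        rw [h1]; push_cast; rw [hdx, hm]; ring
      linear_combination this
    have hWu : Wp x u := by
      refine ⟨h.1, hu'.ne_zero, ?_, 0, ↑hu'.unit⁻¹,
        by rw [hu'.val_inv_mul, zero_mul, zero_add]⟩
      intro h0
      apply hφy
      have : φ (x + u) = φ y := by rw [map_add, hφx, zero_add]; exact hφu
      rw [← this, h0, map_zero]
    have hWu' : Wp x (y + ((m.val : ℕ) : ZMod a) * x) := by rw [← hum]; exact hWu
    have step1 : pcl x y h = pcl x u hWu := by
      refine (walk2 hdvd h.1 hφx hφy ⟨p, q, hpq⟩ m.val h hWu').trans ?_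
      exact pcl_congr rfl hum.symm hWu' hWu
    have w2 : Wp u (-x-u) := WpT hWu
    calc pcl x y h = pcl x u hWu := step1
    _ = pcl u (-x-u) w2 := pT hWu w2
    _ = pcl u u (Wp_diag_of_unit ha3 hu') := to_diag ha3 hu' w2 (Wp_diag_of_unit ha3 hu')
    _ = pcl 1 1 (Wp_one_one ha3) := fin1 ha3 hu' (Wp_diag_of_unit ha3 hu')

end Aux

theorem graph_connected (a : ℕ) (ha : 3 ≤ a) :
    Nat.card (Quot (triRelV a)) = 1 := by
  haveI : NeZero a := ⟨by omega⟩
  haveI : Fact (1 < a) := ⟨by omega⟩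
  have base : Wp (1 : ZMod a) 1 := Wp_one_one ha
  have key : ∀ α : Ek a 1, Quot.mk (triRelV a) α = pcl 1 1 base := by
    rintro ⟨⟨x, y, z⟩, hm⟩
    obtain ⟨hx, hy, hz, hs, hg⟩ := hm
    have hz' : z = -x - y := by linear_combination hs
    have hW : Wp x y := by
      refine ⟨hx, hy, ?_, ?_⟩
      · intro h0
        exact hz (by rw [hz']; linear_combination -h0)
      · obtain ⟨p, q, r, hc⟩ := (gcd_combo x y z).1 hg
        exact ⟨p - r, q - r, by linear_combination hc - r * hs⟩
    have heq : (⟨(x, y, z), ⟨hx, hy, hz, hs, hg⟩⟩ : Ek a 1)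
        = ⟨(x, y, -x-y), memW hW⟩ := by
      apply Subtype.ext
      simp only
      rw [hz']
    rw [heq]
    exact key_red ha x y hW
  have huniq : ∀ q : Quot (triRelV a), q = pcl 1 1 base := by
    intro q
    induction q using Quot.ind with
    | _ α => exact key α
  haveI : Unique (Quot (triRelV a)) :=
    { default := pcl 1 1 base, uniq := huniq }
  exact Nat.card_unique
end

section
/- Let a ≥ 2 and k ≥ 1 be integers. The group homomorphism ℤ/aℤ → ℤ/(ka)ℤ sending the class of an integer n to the class of k·n induces, applied componentwise, a bijection from E_1(a) onto E_k(ka), and this bijection intertwines the maps S and T on (ℤ/aℤ)³ with the maps S and T on (ℤ/(ka)ℤ)³. -/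
/-- The map `ℤ/aℤ → ℤ/(ka)ℤ` sending the class of `n` to the class of `k·n`. -/
def dil (a k : ℕ) (x : ZMod a) : ZMod (k * a) := ((k * x.val : ℕ) : ZMod (k * a))

/-- The componentwise extension of `dil` to triples. -/
def dil3 (a k : ℕ) (v : ZMod a × ZMod a × ZMod a) :
    ZMod (k * a) × ZMod (k * a) × ZMod (k * a) :=
  (dil a k v.1, dil a k v.2.1, dil a k v.2.2)

section aux
variable {a k : ℕ}

lemma dil_val (ha : 2 ≤ a) (hk : 1 ≤ k) (x : ZMod a) : (dil a k x).val = k * x.val := by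
  haveI : NeZero a := ⟨by omega⟩
  have hx : x.val < a := ZMod.val_lt x
  have : k * x.val < k * a := Nat.mul_lt_mul_of_pos_left hx (by omega)
  rw [dil, ZMod.val_natCast, Nat.mod_eq_of_lt this]

lemma dil_inj (ha : 2 ≤ a) (hk : 1 ≤ k) : Function.Injective (dil a k) := by
  haveI : NeZero a := ⟨by omega⟩
  intro x y h
  have := congrArg ZMod.val h
  rw [dil_val ha hk, dil_val ha hk] at this
  have hv : x.val = y.val := Nat.eq_of_mul_eq_mul_left (by omega) this
  exact ZMod.val_injective a hv

lemma dil_cast (ha : 2 ≤ a) (hk : 1 ≤ k) (s : ℕ) : dil a k ((s : ZMod a)) = ((k * s : ℕ) : ZMod (k * a)) := by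
  haveI : NeZero a := ⟨by omega⟩
  rw [dil, ZMod.val_natCast]
  have h : k * s = k * (s % a) + (k * a) * (s / a) := by
    conv_lhs => rw [← Nat.mod_add_div s a]
    ring
  rw [h]
  push_cast
  simp [← Nat.cast_mul]

lemma dil_add (ha : 2 ≤ a) (hk : 1 ≤ k) (x y : ZMod a) : dil a k (x + y) = dil a k x + dil a k y := by
  haveI : NeZero a := ⟨by omega⟩
  have h1 : x + y = ((x.val + y.val : ℕ) : ZMod a) := by push_cast; simp [ZMod.natCast_val]
  rw [h1, dil_cast ha hk, Nat.mul_add]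
  rw [dil, dil]
  push_cast
  ring

lemma dil_zero : dil a k (0 : ZMod a) = 0 := by
  simp [dil]

lemma dil_ne_zero (ha : 2 ≤ a) (hk : 1 ≤ k) {x : ZMod a} (hx : x ≠ 0) : dil a k x ≠ 0 := by
  intro h
  exact hx (dil_inj ha hk (h.trans (dil_zero).symm))

end aux

theorem dilation_bijection (a k : ℕ) (ha : 2 ≤ a) (hk : 1 ≤ k) :
    (∀ x y : ZMod a, dil a k (x + y) = dil a k x + dil a k y) ∧
    Set.BijOn (dil3 a k) (Ek a 1) (Ek (k * a) k) ∧
    (∀ v : ZMod a × ZMod a × ZMod a,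
      dil3 a k (Sm v) = Sm (dil3 a k v) ∧ dil3 a k (Tm v) = Tm (dil3 a k v)) := by
  haveI : NeZero a := ⟨by omega⟩
  haveI : NeZero (k * a) := ⟨by positivity⟩
  refine ⟨dil_add ha hk, ⟨?_, ?_, ?_⟩, ?_⟩
  · -- MapsTo
    rintro ⟨x, y, z⟩ ⟨hx, hy, hz, hsum, hgcd⟩
    refine ⟨dil_ne_zero ha hk hx, dil_ne_zero ha hk hy, dil_ne_zero ha hk hz, ?_, ?_⟩
    · show dil a k x + dil a k y + dil a k z = 0
      rw [← dil_add ha hk, ← dil_add ha hk, hsum, dil_zero]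
    · show Nat.gcd (Nat.gcd (Nat.gcd (dil a k x).val (dil a k y).val) (dil a k z).val) (k * a) = k
      rw [dil_val ha hk, dil_val ha hk, dil_val ha hk, Nat.gcd_mul_left, Nat.gcd_mul_left,
        Nat.gcd_mul_left, hgcd, Nat.mul_one]
  · -- InjOn
    intro v _ w _ h
    obtain ⟨h1, h23⟩ := Prod.mk.injEq _ _ _ _ ▸ (by exact h : dil3 a k v = dil3 a k w)
    obtain ⟨h2, h3⟩ := Prod.mk.injEq _ _ _ _ ▸ h23
    exact Prod.ext (dil_inj ha hk h1) (Prod.ext (dil_inj ha hk h2) (dil_inj ha hk h3))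
  · -- SurjOn
    rintro ⟨w1, w2, w3⟩ ⟨hw1, hw2, hw3, hsum, hgcd⟩
    have hk0 : 0 < k := hk
    have hgd : k ∣ Nat.gcd (Nat.gcd (Nat.gcd w1.val w2.val) w3.val) (k * a) := dvd_of_eq hgcd.symm
    have hdvd1 : k ∣ w1.val :=
      dvd_trans (dvd_trans (dvd_trans hgd (Nat.gcd_dvd_left _ _)) (Nat.gcd_dvd_left _ _))
        (Nat.gcd_dvd_left _ _)
    have hdvd2 : k ∣ w2.val :=
      dvd_trans (dvd_trans (dvd_trans hgd (Nat.gcd_dvd_left _ _)) (Nat.gcd_dvd_left _ _))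
        (Nat.gcd_dvd_right _ _)
    have hdvd3 : k ∣ w3.val :=
      dvd_trans (dvd_trans hgd (Nat.gcd_dvd_left _ _)) (Nat.gcd_dvd_right _ _)
    have he1 : k * (w1.val / k) = w1.val := Nat.mul_div_cancel' hdvd1
    have he2 : k * (w2.val / k) = w2.val := Nat.mul_div_cancel' hdvd2
    have he3 : k * (w3.val / k) = w3.val := Nat.mul_div_cancel' hdvd3
    have hlt1 : w1.val / k < a := (Nat.div_lt_iff_lt_mul hk0).mpr (show w1.val < a * k by rw [Nat.mul_comm a k]; exact ZMod.val_lt w1)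
    have hlt2 : w2.val / k < a := (Nat.div_lt_iff_lt_mul hk0).mpr (show w2.val < a * k by rw [Nat.mul_comm a k]; exact ZMod.val_lt w2)
    have hlt3 : w3.val / k < a := (Nat.div_lt_iff_lt_mul hk0).mpr (show w3.val < a * k by rw [Nat.mul_comm a k]; exact ZMod.val_lt w3)
    have hvx : ((w1.val / k : ℕ) : ZMod a).val = w1.val / k := by
      rw [ZMod.val_natCast, Nat.mod_eq_of_lt hlt1]
    have hvy : ((w2.val / k : ℕ) : ZMod a).val = w2.val / k := by
      rw [ZMod.val_natCast, Nat.mod_eq_of_lt hlt2]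
    have hvz : ((w3.val / k : ℕ) : ZMod a).val = w3.val / k := by
      rw [ZMod.val_natCast, Nat.mod_eq_of_lt hlt3]
    have hdx : dil a k ((w1.val / k : ℕ) : ZMod a) = w1 := by
      rw [dil, hvx, he1, ZMod.natCast_val, ZMod.cast_id]
    have hdy : dil a k ((w2.val / k : ℕ) : ZMod a) = w2 := by
      rw [dil, hvy, he2, ZMod.natCast_val, ZMod.cast_id]
    have hdz : dil a k ((w3.val / k : ℕ) : ZMod a) = w3 := by
      rw [dil, hvz, he3, ZMod.natCast_val, ZMod.cast_id]
    refine ⟨(((w1.val / k : ℕ) : ZMod a), ((w2.val / k : ℕ) : ZMod a), ((w3.val / k : ℕ) : ZMod a)),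
      ⟨?_, ?_, ?_, ?_, ?_⟩, ?_⟩
    · intro h
      exact hw1 (by rw [← hdx, show ((w1.val / k : ℕ) : ZMod a) = 0 from h, dil_zero])
    · intro h
      exact hw2 (by rw [← hdy, show ((w2.val / k : ℕ) : ZMod a) = 0 from h, dil_zero])
    · intro h
      exact hw3 (by rw [← hdz, show ((w3.val / k : ℕ) : ZMod a) = 0 from h, dil_zero])
    · apply dil_inj ha hk
      show dil a k _ = dil a k 0
      rw [dil_add ha hk, dil_add ha hk, hdx, hdy, hdz, dil_zero]
      exact hsum
    · show Nat.gcd (Nat.gcd (Nat.gcd (((w1.val / k : ℕ) : ZMod a)).val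
        (((w2.val / k : ℕ) : ZMod a)).val) (((w3.val / k : ℕ) : ZMod a)).val) a = 1
      apply Nat.eq_of_mul_eq_mul_left hk0
      rw [Nat.mul_one, hvx, hvy, hvz, ← Nat.gcd_mul_left, ← Nat.gcd_mul_left, ← Nat.gcd_mul_left,
        he1, he2, he3]
      exact hgcd
    · show (dil a k _, dil a k _, dil a k _) = (w1, w2, w3)
      rw [hdx, hdy, hdz]
  · -- equivariance
    intro v
    constructor
    · show (dil a k (-v.1), dil a k (-v.2.1), dil a k (-v.2.2))
        = (-(dil a k v.1), -(dil a k v.2.1), -(dil a k v.2.2))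
      have neg : ∀ x : ZMod a, dil a k (-x) = -(dil a k x) := by
        intro x
        have := dil_add ha hk (-x) x
        rw [neg_add_cancel, dil_zero] at this
        exact eq_neg_of_add_eq_zero_left this.symm
      rw [neg, neg, neg]
    · rfl
end

section
/- For every integer a ≥ 4, 6 divides 5·F(a) + 2·φ(a), where F(a) = Σ_{d ∣ a} μ(a/d)·(⌊d/2⌋ + (d−1)(d−2)/2), μ is the Möbius function, and φ is Euler's totient function. -/
open ArithmeticFunction Finset in
/-- Convolution of `μ` with `g` at a prime power. -/
lemma moebius_conv_prime_pow (g : ℕ → ℤ) {p k : ℕ} (hp : p.Prime) (hk : k ≠ 0) :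
    ∑ d ∈ (p ^ k).divisors, (moebius (p ^ k / d) : ℤ) * g d = g (p ^ k) - g (p ^ (k - 1)) := by
  obtain ⟨m, rfl⟩ : ∃ m, k = m + 1 := ⟨k - 1, by omega⟩
  rw [Nat.sum_divisors_prime_pow hp, Finset.sum_range_succ, Finset.sum_range_succ]
  have hz : ∀ i ∈ Finset.range m, (moebius (p ^ (m + 1) / p ^ i) : ℤ) * g (p ^ i) = 0 := by
    intro i hi
    rw [Finset.mem_range] at hi
    rw [Nat.pow_div (by omega) hp.pos, moebius_apply_prime_pow hp (by omega),
      if_neg (by omega)]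
    simp
  rw [Finset.sum_eq_zero hz, Nat.pow_div (by omega) hp.pos, Nat.pow_div le_rfl hp.pos]
  simp only [Nat.sub_self, pow_zero, Nat.add_sub_cancel_left, Nat.add_sub_cancel]
  rw [moebius_apply_one, moebius_apply_prime_pow hp (by omega), if_pos rfl]
  push_cast
  ring

open ArithmeticFunction Finset

/-- The square function as an arithmetic function over ℤ. -/
def sqAF : ArithmeticFunction ℤ := ⟨fun d => (d : ℤ) ^ 2, by simp⟩

/-- The parity indicator as an arithmetic function over ℤ. -/
def chiAF : ArithmeticFunction ℤ := ⟨fun d => ((d % 2 : ℕ) : ℤ), by simp⟩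

/-- Jordan totient J₂ as a Dirichlet convolution. -/
def JAF : ArithmeticFunction ℤ := moebius * sqAF

/-- μ * χ. -/
def GAF : ArithmeticFunction ℤ := moebius * chiAF

lemma sqAF_mult : sqAF.IsMultiplicative := by
  constructor
  · simp [sqAF]
  · intro m n _
    simp [sqAF]
    push_cast
    ring

lemma chiAF_mult : chiAF.IsMultiplicative := by
  constructor
  · simp [chiAF]
  · intro m n _
    simp only [chiAF, ArithmeticFunction.coe_mk]
    rcases Nat.mod_two_eq_zero_or_one m with h1 | h1 <;>
      rcases Nat.mod_two_eq_zero_or_one n with h2 | h2 <;>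
      simp [Nat.mul_mod, h1, h2]

lemma JAF_mult : JAF.IsMultiplicative := isMultiplicative_moebius.mul sqAF_mult

lemma GAF_mult : GAF.IsMultiplicative := isMultiplicative_moebius.mul chiAF_mult

lemma JAF_apply (a : ℕ) : JAF a = ∑ d ∈ a.divisors, (moebius (a / d) : ℤ) * (d : ℤ) ^ 2 := by
  rw [JAF, ArithmeticFunction.mul_apply,
    Nat.sum_divisorsAntidiagonal' (f := fun x y => (moebius x : ℤ) * sqAF y)]
  rfl

lemma GAF_apply (a : ℕ) : GAF a = ∑ d ∈ a.divisors, (moebius (a / d) : ℤ) * ((d % 2 : ℕ) : ℤ) := by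
  rw [GAF, ArithmeticFunction.mul_apply,
    Nat.sum_divisorsAntidiagonal' (f := fun x y => (moebius x : ℤ) * chiAF y)]
  rfl

lemma JAF_prime_pow {p k : ℕ} (hp : p.Prime) (hk : k ≠ 0) :
    JAF (p ^ k) = (p : ℤ) ^ (2 * (k - 1)) * ((p : ℤ) ^ 2 - 1) := by
  rw [JAF_apply, moebius_conv_prime_pow (fun d => (d : ℤ) ^ 2) hp hk]
  obtain ⟨m, rfl⟩ : ∃ m, k = m + 1 := ⟨k - 1, by omega⟩
  simp only [Nat.add_sub_cancel]
  push_cast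
  ring

lemma GAF_prime_pow {p k : ℕ} (hp : p.Prime) (hk : k ≠ 0) :
    GAF (p ^ k) = ((p ^ k % 2 : ℕ) : ℤ) - ((p ^ (k - 1) % 2 : ℕ) : ℤ) :=
  GAF_apply _ ▸ moebius_conv_prime_pow (fun d => ((d % 2 : ℕ) : ℤ)) hp hk

lemma prod_form {f : ArithmeticFunction ℤ} (hf : f.IsMultiplicative) {a : ℕ} (ha : a ≠ 0) :
    f a = ∏ p ∈ a.primeFactors, f (p ^ a.factorization p) := by
  rw [hf.multiplicative_factorization f ha]
  simp [Finsupp.prod, Nat.support_factorization]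

lemma primeFactors_singleton {a q : ℕ} (ha : 2 ≤ a) (h : ∀ p ∈ a.primeFactors, p = q) :
    a.primeFactors = {q} := by
  obtain ⟨p, hp⟩ := Nat.nonempty_primeFactors.mpr (by omega : 1 < a)
  have := h p hp
  subst this
  exact Finset.eq_singleton_iff_unique_mem.mpr ⟨hp, h⟩

lemma eq_pow_of_primeFactors_singleton {a q : ℕ} (ha : a ≠ 0) (h : a.primeFactors = {q}) :
    a = q ^ a.factorization q := by
  conv_lhs => rw [← Nat.factorization_prod_pow_eq_self ha]
  simp [Finsupp.prod, Nat.support_factorization, h]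

lemma factorization_ne_zero {a p : ℕ} (ha : a ≠ 0) (hp : p ∈ a.primeFactors) :
    a.factorization p ≠ 0 := by
  rw [← Nat.support_factorization] at hp
  exact Finsupp.mem_support_iff.mp hp

lemma sum_mu {a : ℕ} (ha : a ≠ 1) : ∑ d ∈ a.divisors, (moebius (a / d) : ℤ) = 0 := by
  have h : ((moebius * (zeta : ArithmeticFunction ℤ) : ArithmeticFunction ℤ)) a = (1 : ArithmeticFunction ℤ) a := by
    rw [moebius_mul_coe_zeta]
  rw [ArithmeticFunction.one_apply_ne ha, ArithmeticFunction.mul_apply] at h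
  simp only [natCoe_apply] at h
  rw [Nat.sum_divisorsAntidiagonal' (f := fun x y => (moebius x : ℤ) * ((zeta y : ℕ) : ℤ))] at h
  rw [← h]
  refine Finset.sum_congr rfl fun d hd => ?_
  rw [zeta_apply_ne (Nat.pos_of_mem_divisors hd).ne']
  simp

lemma sum_mu_mul_phi {a : ℕ} (ha : a ≠ 0) :
    ∑ d ∈ a.divisors, (moebius (a / d) : ℤ) * (d : ℤ) = (Nat.totient a : ℤ) := by
  have h := (sum_eq_iff_sum_mul_moebius_eq (R := ℤ) (f := fun n => (Nat.totient n : ℤ))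
    (g := fun n => (n : ℤ))).mp ?_ a (Nat.pos_of_ne_zero ha)
  · simp only [Int.cast_id] at h
    rw [Nat.sum_divisorsAntidiagonal' (f := fun x y => (moebius x : ℤ) * (y : ℤ))] at h
    exact h
  · intro n hn
    exact_mod_cast congrArg (Nat.cast : ℕ → ℤ) (Nat.sum_totient n)

lemma GAF_prime_pow_eq_zero {p k : ℕ} (hp : p.Prime) (hk : k ≠ 0) (h : p ≠ 2 ∨ 2 ≤ k) :
    GAF (p ^ k) = 0 := by
  rw [GAF_prime_pow hp hk]
  rcases eq_or_ne p 2 with rfl | hne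
  · have hk2 : 2 ≤ k := h.resolve_left (by simp)
    have h1 : 2 ^ k % 2 = 0 := by rw [Nat.pow_mod]; simp [Nat.zero_pow (show 0 < k by omega)]
    have h2 : 2 ^ (k - 1) % 2 = 0 := by
      rw [Nat.pow_mod]; simp [Nat.zero_pow (show 0 < k - 1 by omega)]
    rw [h1, h2]
    simp
  · have hodd : Odd p := hp.odd_of_ne_two hne
    have h1 : p ^ k % 2 = 1 := Nat.odd_iff.mp hodd.pow
    have h2 : p ^ (k - 1) % 2 = 1 := Nat.odd_iff.mp hodd.pow
    rw [h1, h2]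
    simp

lemma GAF_eq_zero {a : ℕ} (ha : 3 ≤ a) : GAF a = 0 := by
  have ha0 : a ≠ 0 := by omega
  rw [prod_form GAF_mult ha0]
  by_cases hodd : ∃ p ∈ a.primeFactors, p ≠ 2
  · obtain ⟨p, hp, hp2⟩ := hodd
    exact Finset.prod_eq_zero hp
      (GAF_prime_pow_eq_zero (Nat.prime_of_mem_primeFactors hp)
        (factorization_ne_zero ha0 hp) (Or.inl hp2))
  · push_neg at hodd
    have hsing : a.primeFactors = {2} := primeFactors_singleton (by omega) hodd
    have hak : a = 2 ^ a.factorization 2 := eq_pow_of_primeFactors_singleton ha0 hsing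
    have hk2 : 2 ≤ a.factorization 2 := by
      by_contra hc
      interval_cases h : a.factorization 2 <;> simp at hak <;> omega
    rw [hsing, Finset.prod_singleton]
    exact GAF_prime_pow_eq_zero Nat.prime_two (by omega) (Or.inr hk2)

lemma four_dvd_sq_sub_one {p : ℕ} (hodd : Odd p) : (4 : ℤ) ∣ (p : ℤ) ^ 2 - 1 := by
  obtain ⟨t, ht⟩ := hodd
  subst ht
  refine ⟨t * t + t, by push_cast; ring⟩

lemma three_dvd_sq_sub_one {p : ℕ} (h : ¬ 3 ∣ p) : (3 : ℤ) ∣ (p : ℤ) ^ 2 - 1 := by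
  obtain ⟨q, hq⟩ : ∃ q, p = 3 * q + 1 ∨ p = 3 * q + 2 := ⟨p / 3, by omega⟩
  rcases hq with rfl | rfl
  · exact ⟨3 * q ^ 2 + 2 * q, by push_cast; ring⟩
  · exact ⟨3 * q ^ 2 + 4 * q + 1, by push_cast; ring⟩

lemma four_dvd_JAF {a : ℕ} (ha : 3 ≤ a) : (4 : ℤ) ∣ JAF a := by
  have ha0 : a ≠ 0 := by omega
  rw [prod_form JAF_mult ha0]
  by_cases hodd : ∃ p ∈ a.primeFactors, p ≠ 2
  · obtain ⟨p, hp, hp2⟩ := hodd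
    have hpp := Nat.prime_of_mem_primeFactors hp
    have h4 : (4 : ℤ) ∣ JAF (p ^ a.factorization p) := by
      rw [JAF_prime_pow hpp (factorization_ne_zero ha0 hp)]
      exact dvd_mul_of_dvd_right (four_dvd_sq_sub_one (hpp.odd_of_ne_two hp2)) _
    exact h4.trans (Finset.dvd_prod_of_mem _ hp)
  · push_neg at hodd
    have hsing : a.primeFactors = {2} := primeFactors_singleton (by omega) hodd
    have hak : a = 2 ^ a.factorization 2 := eq_pow_of_primeFactors_singleton ha0 hsing
    have hk2 : 2 ≤ a.factorization 2 := by
      by_contra hc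
      interval_cases h : a.factorization 2 <;> simp at hak <;> omega
    rw [hsing, Finset.prod_singleton, JAF_prime_pow Nat.prime_two (by omega)]
    refine dvd_mul_of_dvd_left ?_ _
    calc (4 : ℤ) = 2 ^ 2 := by norm_num
      _ ∣ 2 ^ (2 * (a.factorization 2 - 1)) := pow_dvd_pow 2 (by omega)
      _ = (2 : ℕ) ^ (2 * (a.factorization 2 - 1)) := by norm_num

lemma three_dvd_JAF {a : ℕ} (ha : 4 ≤ a) : (3 : ℤ) ∣ JAF a := by
  have ha0 : a ≠ 0 := by omega
  rw [prod_form JAF_mult ha0]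
  by_cases hodd : ∃ p ∈ a.primeFactors, p ≠ 3
  · obtain ⟨p, hp, hp3⟩ := hodd
    have hpp := Nat.prime_of_mem_primeFactors hp
    have hnd : ¬ 3 ∣ p := by
      intro hd
      rcases (Nat.Prime.eq_one_or_self_of_dvd hpp 3 hd) with h | h <;> omega
    have h3 : (3 : ℤ) ∣ JAF (p ^ a.factorization p) := by
      rw [JAF_prime_pow hpp (factorization_ne_zero ha0 hp)]
      exact dvd_mul_of_dvd_right (three_dvd_sq_sub_one hnd) _
    exact h3.trans (Finset.dvd_prod_of_mem _ hp)
  · push_neg at hodd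
    have hsing : a.primeFactors = {3} := primeFactors_singleton (by omega) hodd
    have hak : a = 3 ^ a.factorization 3 := eq_pow_of_primeFactors_singleton ha0 hsing
    have hk2 : 2 ≤ a.factorization 3 := by
      by_contra hc
      interval_cases h : a.factorization 3 <;> simp at hak <;> omega
    rw [hsing, Finset.prod_singleton, JAF_prime_pow Nat.prime_three (by omega)]
    refine dvd_mul_of_dvd_left ?_ _
    calc (3 : ℤ) ∣ 3 ^ (2 * (a.factorization 3 - 1)) := dvd_pow_self 3 (by omega)
      _ = (3 : ℕ) ^ (2 * (a.factorization 3 - 1)) := by norm_num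

lemma twelve_dvd_JAF {a : ℕ} (ha : 4 ≤ a) : (12 : ℤ) ∣ JAF a := by
  have hcop : IsCoprime (3 : ℤ) 4 := by
    rw [Int.isCoprime_iff_gcd_eq_one]
    decide
  have := hcop.mul_dvd (three_dvd_JAF ha) (four_dvd_JAF (by omega))
  exact (show (12 : ℤ) = 3 * 4 by norm_num) ▸ this

lemma key_pointwise {d : ℕ} (hd : 1 ≤ d) :
    2 * (((d / 2 : ℕ) : ℤ) + (((d - 1) * (d - 2) / 2 : ℕ) : ℤ)) =
      (d : ℤ) ^ 2 - 2 * d + 2 - ((d % 2 : ℕ) : ℤ) := by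
  rcases Nat.lt_or_ge d 2 with h | h
  · interval_cases d
    norm_num
  · have heven : Even ((d - 1) * (d - 2)) := by
      rcases Nat.even_or_odd d with he | ho
      · obtain ⟨c, hc⟩ := he
        exact Even.mul_left ⟨c - 1, by omega⟩ _
      · obtain ⟨c, hc⟩ := ho
        exact Even.mul_right ⟨c, by omega⟩ _
    obtain ⟨c, hc⟩ := heven
    have hdiv : (d - 1) * (d - 2) / 2 = c := by omega
    have hcz : ((d : ℤ) - 1) * ((d : ℤ) - 2) = (c : ℤ) + (c : ℤ) := by
      zify [show 1 ≤ d by omega, show 2 ≤ d by omega] at hc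
      linarith [hc]
    have hc2 : 2 * ((((d - 1) * (d - 2) / 2 : ℕ)) : ℤ) = (d : ℤ) ^ 2 - 3 * (d : ℤ) + 2 := by
      rw [hdiv]
      linear_combination -hcz
    have hq : 2 * ((d / 2 : ℕ) : ℤ) = (d : ℤ) - ((d % 2 : ℕ) : ℤ) := by omega
    linarith [hq, hc2]

theorem six_dvd_chamber_count (a : ℕ) (ha : 4 ≤ a) :
    (6 : ℤ) ∣ 5 * F a + 2 * (Nat.totient a : ℤ) := by
  have ha0 : a ≠ 0 := by omega
  have hG : ∑ d ∈ a.divisors, (moebius (a / d) : ℤ) * ((d % 2 : ℕ) : ℤ) = 0 := by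
    rw [← GAF_apply]; exact GAF_eq_zero (by omega)
  have hOne : ∑ d ∈ a.divisors, (moebius (a / d) : ℤ) = 0 := sum_mu (by omega)
  have hPhi : ∑ d ∈ a.divisors, (moebius (a / d) : ℤ) * (d : ℤ) = (Nat.totient a : ℤ) :=
    sum_mu_mul_phi ha0
  have hKey : 2 * F a = JAF a - 2 * (Nat.totient a : ℤ) := by
    calc 2 * F a
        = ∑ d ∈ a.divisors, ((moebius (a / d) : ℤ) * (d : ℤ) ^ 2
            - 2 * ((moebius (a / d) : ℤ) * (d : ℤ)) + 2 * (moebius (a / d) : ℤ)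
            - (moebius (a / d) : ℤ) * ((d % 2 : ℕ) : ℤ)) := by
          rw [F, Finset.mul_sum]
          refine Finset.sum_congr rfl fun d hd => ?_
          have h := key_pointwise (Nat.pos_of_mem_divisors hd)
          calc 2 * ((moebius (a / d) : ℤ) *
                (((d / 2 : ℕ) : ℤ) + (((d - 1) * (d - 2) / 2 : ℕ) : ℤ)))
              = (moebius (a / d) : ℤ) *
                (2 * (((d / 2 : ℕ) : ℤ) + (((d - 1) * (d - 2) / 2 : ℕ) : ℤ))) := by ring
            _ = (moebius (a / d) : ℤ) *
                ((d : ℤ) ^ 2 - 2 * d + 2 - ((d % 2 : ℕ) : ℤ)) := by rw [h]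
            _ = _ := by ring
      _ = (∑ d ∈ a.divisors, (moebius (a / d) : ℤ) * (d : ℤ) ^ 2)
            - 2 * (∑ d ∈ a.divisors, (moebius (a / d) : ℤ) * (d : ℤ))
            + 2 * (∑ d ∈ a.divisors, (moebius (a / d) : ℤ))
            - ∑ d ∈ a.divisors, (moebius (a / d) : ℤ) * ((d % 2 : ℕ) : ℤ) := by
          rw [Finset.sum_sub_distrib, Finset.sum_add_distrib, Finset.sum_sub_distrib,
            ← Finset.mul_sum, ← Finset.mul_sum]
      _ = JAF a - 2 * (Nat.totient a : ℤ) := by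
          rw [hG, hPhi, hOne, JAF_apply]; ring
  obtain ⟨j, hj⟩ := twelve_dvd_JAF ha
  obtain ⟨t, ht⟩ : (2 : ℤ) ∣ (Nat.totient a : ℤ) := by
    exact_mod_cast Int.natCast_dvd_natCast.mpr (Nat.totient_even (by omega : 2 < a)).two_dvd
  exact ⟨5 * j - t, by omega⟩
end
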